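/- arXiv:1303.2874 — 3 statements merged into one kernel-verified Lean document; each statement's English description precedes it below -/
import Mathlib

section
/- Let $(Y_1, Y_2)$ be a discrete random vector with joint p.m.f. $p_{\theta_0}(y_1,y_2)>0$ under the true parameter $\theta_0$, marginal $p_{1,\theta_0}(y_1)>0$, and let $\lambda(\cdot)$ be a positive function of $y_1$. Then for any parameter $\theta$, $P_{\theta_0}\{p_{\theta_0}(Y_1,Y_2) \le \lambda(Y_1)\, p_\theta(Y_1,Y_2) \mid Y_1 = y_1\} \le \lambda(y_1)\, p_{1,\theta}(y_1)/p_{1,\theta_0}(y_1)$. -/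
/-- Generalized subset inequality: for any positive function `lam` of the subset
data `y₁`, the conditional probability, given `Y₁ = y₁`, that
`p_{θ₀}(Y₁,Y₂) ≤ lam(Y₁) p_θ(Y₁,Y₂)` is at most `lam(y₁) p_{1,θ}(y₁)/p_{1,θ₀}(y₁)`. -/
theorem generalized_subset_inequality {α β : Type*} [Countable α] [Countable β]
    (pθ0 pθ : α → β → ℝ) (lam : α → ℝ)
    (hθ0pos : ∀ y1 y2, 0 < pθ0 y1 y2) (hθnn : ∀ y1 y2, 0 ≤ pθ y1 y2)
    (hlam : ∀ y1, 0 < lam y1)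
    (hθ0sum : ∀ y1, Summable (pθ0 y1)) (hθsum : ∀ y1, Summable (pθ y1))
    (y1 : α) (hy1 : 0 < ∑' y2, pθ0 y1 y2) :
    (∑' y2, if pθ0 y1 y2 ≤ lam y1 * pθ y1 y2
        then pθ0 y1 y2 / (∑' y2', pθ0 y1 y2') else 0)
      ≤ lam y1 * ((∑' y2, pθ y1 y2) / (∑' y2, pθ0 y1 y2)) := by
  set S : ℝ := ∑' y2, pθ0 y1 y2 with hS
  have hkey : ∀ y2, (if pθ0 y1 y2 ≤ lam y1 * pθ y1 y2
      then pθ0 y1 y2 / S else 0) ≤ lam y1 * pθ y1 y2 / S := by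
    intro y2
    split_ifs with h
    · gcongr
    · exact div_nonneg (mul_nonneg (hlam y1).le (hθnn y1 y2)) hy1.le
  have hsum2 : Summable (fun y2 => lam y1 * pθ y1 y2 / S) := by
    simpa [mul_div_assoc] using ((hθsum y1).div_const S).mul_left (lam y1)
  have hsum1 : Summable (fun y2 => if pθ0 y1 y2 ≤ lam y1 * pθ y1 y2
      then pθ0 y1 y2 / S else 0) := by
    refine Summable.of_nonneg_of_le (fun y2 => ?_) hkey hsum2
    split_ifs with h
    · exact div_nonneg (hθ0pos y1 y2).le hy1.le
    · exact le_rfl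
  calc (∑' y2, if pθ0 y1 y2 ≤ lam y1 * pθ y1 y2 then pθ0 y1 y2 / S else 0)
      ≤ ∑' y2, lam y1 * pθ y1 y2 / S := Summable.tsum_le_tsum hkey hsum1 hsum2
    _ = lam y1 * ((∑' y2, pθ y1 y2) / S) := by
        rw [← tsum_div_const, ← tsum_mul_left]
        simp [mul_div_assoc]
end

section
/- Let $(X,Y)$ be bivariate normal with mean zero, $\mathrm{Var}(X)=\mathrm{Var}(Y)=\psi_0^2>0$ and correlation $\gamma \in (-1,1)$, and fix $\mu_0 \in \mathbb{R}$. Define $p_\gamma(1,1) = E\big[\frac{e^{\mu_0+X}}{1+e^{\mu_0+X}} \cdot \frac{e^{\mu_0+Y}}{1+e^{\mu_0+Y}}\big]$. Then $p_\gamma(1,1) = \int_0^\infty \int_0^\infty P_\gamma\{X \ge \mathrm{logit}(s)-\mu_0,\ Y \ge \mathrm{logit}(t)-\mu_0\}\,ds\,dt$ restricted to $s,t \in (0,1)$ (i.e., with the integrand vanishing for $s$ or $t \ge 1$), and $p_\gamma(1,1)$ is strictly increasing in $\gamma$. -/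
open ProbabilityTheory MeasureTheory Real Set
open scoped ENNReal NNReal
set_option maxHeartbeats 1000000

namespace OrthantAux

noncomputable def L : ℝ → ℝ := fun x => Real.exp x / (1 + Real.exp x)
noncomputable def L' : ℝ → ℝ := fun x => Real.exp x / (1 + Real.exp x) ^ 2

lemma one_add_exp_pos (x : ℝ) : 0 < 1 + Real.exp x := by positivity
lemma L_pos (x : ℝ) : 0 < L x := div_pos (Real.exp_pos x) (one_add_exp_pos x)
lemma L_lt_one (x : ℝ) : L x < 1 := by
  rw [L]; rw [div_lt_one (one_add_exp_pos x)]; linarith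
lemma L_nonneg (x : ℝ) : 0 ≤ L x := (L_pos x).le
lemma L_le_one (x : ℝ) : L x ≤ 1 := (L_lt_one x).le

lemma hasDerivAt_L (x : ℝ) : HasDerivAt L (L' x) x := by
  have h1 : HasDerivAt Real.exp (Real.exp x) x := Real.hasDerivAt_exp x
  have h2 : HasDerivAt (fun y => 1 + Real.exp y) (Real.exp x) x :=
    h1.const_add 1
  have h3 := h1.div h2 (ne_of_gt (one_add_exp_pos x))
  refine h3.congr_deriv ?_
  rw [L']; field_simp; ring

lemma L'_pos (x : ℝ) : 0 < L' x := div_pos (Real.exp_pos x) (by positivity)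
lemma L'_le_one (x : ℝ) : L' x ≤ 1 := by
  rw [L', div_le_one (by positivity)]
  nlinarith [Real.exp_pos x, sq_nonneg (1 - Real.exp x)]

lemma L_strictMono : StrictMono L :=
  strictMono_of_deriv_pos (fun x => by rw [(hasDerivAt_L x).deriv]; exact L'_pos x)

lemma L_cont : Continuous L := by
  apply Continuous.div (Real.continuous_exp) (by continuity)
  exact fun x => ne_of_gt (one_add_exp_pos x)

/-- The key 1D sub-level set computation. -/
lemma levelset_eq (a : ℝ) :
    {s : ℝ | s < 1 ∧ Real.log (s / (1 - s)) ≤ a} ∩ Ioi 0 = Ioc 0 (L a) := by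
  ext s
  simp only [mem_inter_iff, mem_setOf_eq, mem_Ioi, mem_Ioc]
  constructor
  · rintro ⟨⟨hs1, hs3⟩, hs0⟩
    refine ⟨hs0, ?_⟩
    have h1s : 0 < 1 - s := by linarith
    have hq : 0 < s / (1 - s) := div_pos hs0 h1s
    have : s / (1 - s) ≤ Real.exp a := by
      calc s / (1 - s) = Real.exp (Real.log (s / (1 - s))) := (Real.exp_log hq).symm
      _ ≤ Real.exp a := Real.exp_le_exp.mpr hs3
    rw [div_le_iff₀ h1s] at this
    rw [L, le_div_iff₀ (one_add_exp_pos a)]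
    nlinarith
  · rintro ⟨hs0, hsa⟩
    have hs1 : s < 1 := lt_of_le_of_lt hsa (L_lt_one a)
    have h1s : 0 < 1 - s := by linarith
    refine ⟨⟨hs1, ?_⟩, hs0⟩
    have : s / (1 - s) ≤ Real.exp a := by
      rw [div_le_iff₀ h1s]
      rw [L, le_div_iff₀ (one_add_exp_pos a)] at hsa
      nlinarith
    calc Real.log (s / (1 - s)) ≤ Real.log (Real.exp a) :=
          Real.log_le_log (div_pos hs0 h1s) this
    _ = a := Real.log_exp a

lemma levelset_volume (a : ℝ) :
    (volume.restrict (Ioi (0:ℝ))) {s : ℝ | s < 1 ∧ Real.log (s / (1 - s)) ≤ a}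
      = ENNReal.ofReal (L a) := by
  rw [Measure.restrict_apply' measurableSet_Ioi, levelset_eq a, Real.volume_Ioc, sub_zero]




noncomputable def W : ℝ × ℝ → ℝ := fun z => gaussianPDFReal 0 1 z.1 * gaussianPDFReal 0 1 z.2

lemma W_nonneg (z : ℝ × ℝ) : 0 ≤ W z :=
  mul_nonneg (gaussianPDFReal_nonneg _ _ _) (gaussianPDFReal_nonneg _ _ _)

lemma W_measurable : Measurable W :=
  ((measurable_gaussianPDFReal 0 1).comp measurable_fst).mul
    ((measurable_gaussianPDFReal 0 1).comp measurable_snd)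

lemma gaussian2_eq_withDensity :
    (gaussianReal 0 1).prod (gaussianReal 0 1)
      = (volume : Measure (ℝ × ℝ)).withDensity (fun z => ENNReal.ofReal (W z)) := by
  apply Measure.prod_eq
  intro s t hs ht
  rw [withDensity_apply _ (hs.prod ht)]
  have hW : ∀ z : ℝ × ℝ, ENNReal.ofReal (W z)
      = gaussianPDF 0 1 z.1 * gaussianPDF 0 1 z.2 := by
    intro z
    rw [W, gaussianPDF, gaussianPDF, ← ENNReal.ofReal_mul (gaussianPDFReal_nonneg _ _ _)]
  simp_rw [hW]
  rw [Measure.volume_eq_prod, ← Measure.prod_restrict]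
  rw [lintegral_prod_mul (measurable_gaussianPDF 0 1).aemeasurable
    (measurable_gaussianPDF 0 1).aemeasurable]
  rw [gaussianReal_apply 0 one_ne_zero s, gaussianReal_apply 0 one_ne_zero t]

lemma integral_gaussian2 (G : ℝ × ℝ → ℝ) :
    ∫ z, G z ∂((gaussianReal 0 1).prod (gaussianReal 0 1))
      = ∫ z : ℝ × ℝ, W z * G z := by
  rw [gaussian2_eq_withDensity]
  have : (fun z : ℝ × ℝ => ENNReal.ofReal (W z))
      = fun z => ((W z).toNNReal : ℝ≥0∞) := rfl
  rw [this, integral_withDensity_eq_integral_smul (W_measurable.real_toNNReal) G]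
  congr 1; ext z
  rw [NNReal.smul_def, smul_eq_mul, Real.coe_toNNReal _ (W_nonneg z)]













/-- The reflection `(x,y) ↦ (sx+cy, cx-sy)`, orthogonal when `s²+c²=1`. -/
noncomputable def rot (s c : ℝ) : (ℝ × ℝ) →ₗ[ℝ] (ℝ × ℝ) where
  toFun z := (s * z.1 + c * z.2, c * z.1 - s * z.2)
  map_add' a b := by
    simp only [Prod.fst_add, Prod.snd_add, Prod.mk_add_mk, Prod.mk.injEq]
    constructor <;> ring
  map_smul' m a := by
    simp only [Prod.smul_fst, Prod.smul_snd, smul_eq_mul, Prod.smul_mk, RingHom.id_apply,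
      Prod.mk.injEq]
    constructor <;> ring

lemma rot_apply (s c : ℝ) (z : ℝ × ℝ) :
    rot s c z = (s * z.1 + c * z.2, c * z.1 - s * z.2) := rfl

lemma rot_det (s c : ℝ) (h1 : s ^ 2 + c ^ 2 = 1) : LinearMap.det (rot s c) = -1 := by
  rw [← LinearMap.det_toMatrix (Module.Basis.finTwoProd ℝ)]
  rw [Matrix.det_fin_two]
  simp only [LinearMap.toMatrix_apply, Module.Basis.finTwoProd_zero, Module.Basis.finTwoProd_one,
    Module.Basis.coe_finTwoProd_repr, rot_apply]
  simp only [Matrix.cons_val_zero, Matrix.cons_val_one, Matrix.head_cons]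
  nlinarith [h1]

lemma rot_map_volume (s c : ℝ) (h1 : s ^ 2 + c ^ 2 = 1) :
    Measure.map (rot s c) (volume : Measure (ℝ × ℝ)) = volume := by
  have hd : LinearMap.det (rot s c) ≠ 0 := by rw [rot_det s c h1]; norm_num
  rw [Measure.map_linearMap_addHaar_eq_smul_addHaar volume hd, rot_det s c h1]
  norm_num

lemma W_comp_rot (s c : ℝ) (h1 : s ^ 2 + c ^ 2 = 1) (z : ℝ × ℝ) :
    W (rot s c z) = W z := by
  simp only [W, rot_apply, gaussianPDFReal]
  rw [mul_mul_mul_comm, ← Real.exp_add, mul_mul_mul_comm, ← Real.exp_add]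
  congr 2
  push_cast
  ring_nf
  nlinarith [h1, sq_nonneg z.1, sq_nonneg z.2]

lemma rot_measurable (s c : ℝ) : Measurable (rot s c) := (rot s c).continuous_of_finiteDimensional.measurable

/-- Rotation invariance of the 2D standard Gaussian integral. -/
lemma integral_rot_invariant (s c : ℝ) (h1 : s ^ 2 + c ^ 2 = 1) (F : ℝ × ℝ → ℝ)
    (hF : Measurable F) :
    ∫ z, F (rot s c z) ∂((gaussianReal 0 1).prod (gaussianReal 0 1))
      = ∫ z, F z ∂((gaussianReal 0 1).prod (gaussianReal 0 1)) := by
  rw [integral_gaussian2, integral_gaussian2]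
  calc ∫ z : ℝ × ℝ, W z * F (rot s c z)
      = ∫ z : ℝ × ℝ, (fun w => W w * F w) (rot s c z) := by
        congr 1; ext z; simp only []; rw [W_comp_rot s c h1]
    _ = ∫ w, W w * F w ∂(Measure.map (rot s c) volume) :=
        (integral_map (rot_measurable s c).aemeasurable
          ((W_measurable.mul hF).aestronglyMeasurable)).symm
    _ = ∫ w : ℝ × ℝ, W w * F w := by rw [rot_map_volume s c h1]




lemma integrable_pdf_mul_id :
    Integrable (fun x : ℝ => gaussianPDFReal 0 1 x * x) volume := by
  have h := (integrable_mul_exp_neg_mul_sq (b := (1:ℝ)/2) (by norm_num)).const_mul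
    ((Real.sqrt (2 * π))⁻¹)
  refine h.congr (Filter.Eventually.of_forall fun x => ?_)
  simp only [gaussianPDFReal]
  push_cast
  rw [show -(x - 0) ^ 2 / (2 * 1) = -(1/2) * x ^ 2 by ring]
  ring_nf

lemma integrable_id_gaussian : Integrable (fun x : ℝ => x) (gaussianReal 0 1) := by
  rw [gaussianReal_of_var_ne_zero 0 one_ne_zero]
  have : (gaussianPDF 0 1) = fun x => ((gaussianPDFReal 0 1 x).toNNReal : ℝ≥0∞) := rfl
  rw [this, integrable_withDensity_iff_integrable_smul
    ((measurable_gaussianPDFReal 0 1).real_toNNReal)]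
  refine integrable_pdf_mul_id.congr (Filter.Eventually.of_forall fun x => ?_)
  show gaussianPDFReal 0 1 x * x = (gaussianPDFReal 0 1 x).toNNReal • x
  rw [NNReal.smul_def, smul_eq_mul, Real.coe_toNNReal _ (gaussianPDFReal_nonneg 0 1 x)]

lemma integral_id_gaussian : ∫ x, x ∂(gaussianReal 0 1) = 0 := by
  have hmap := gaussianReal_map_const_mul (μ := 0) (v := 1) (-1)
  have h2 : (⟨(-1:ℝ) ^ 2, sq_nonneg _⟩ : ℝ≥0) * 1 = 1 := by ext; norm_num
  rw [mul_zero] at hmap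
  replace hmap : Measure.map (fun x : ℝ => -1 * x) (gaussianReal 0 1) = gaussianReal 0 1 := by
    rw [hmap]; congr 1
  have hint : ∫ x, x ∂(gaussianReal 0 1) = ∫ x, (-1 : ℝ) * x ∂(gaussianReal 0 1) := by
    calc ∫ x, x ∂(gaussianReal 0 1)
        = ∫ x, x ∂((gaussianReal 0 1).map ((-1 : ℝ) * ·)) := by rw [hmap]
      _ = ∫ x, (-1 : ℝ) * x ∂(gaussianReal 0 1) :=
          integral_map (by fun_prop)
            (by rw [hmap]; exact measurable_id.aestronglyMeasurable)
  simp only [neg_one_mul] at hint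
  rw [integral_neg (f := fun x : ℝ => x)] at hint
  linarith [hint]


lemma integrable_fst_gaussian2 :
    Integrable (fun z : ℝ × ℝ => z.1) ((gaussianReal 0 1).prod (gaussianReal 0 1)) := by
  have hmap : Measure.map Prod.fst ((gaussianReal 0 1).prod (gaussianReal 0 1))
      = gaussianReal 0 1 := by
    rw [Measure.map_fst_prod]; simp
  have := (integrable_map_measure (g := fun x : ℝ => x) (f := Prod.fst)
    (by rw [hmap]; exact integrable_id_gaussian.aestronglyMeasurable)
    measurable_fst.aemeasurable).mp (by rw [hmap]; exact integrable_id_gaussian)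
  exact this

lemma integrable_snd_gaussian2 :
    Integrable (fun z : ℝ × ℝ => z.2) ((gaussianReal 0 1).prod (gaussianReal 0 1)) := by
  have hmap : Measure.map Prod.snd ((gaussianReal 0 1).prod (gaussianReal 0 1))
      = gaussianReal 0 1 := by
    rw [Measure.map_snd_prod]; simp
  have := (integrable_map_measure (g := fun x : ℝ => x) (f := Prod.snd)
    (by rw [hmap]; exact integrable_id_gaussian.aestronglyMeasurable)
    measurable_snd.aemeasurable).mp (by rw [hmap]; exact integrable_id_gaussian)
  exact this

lemma snd_eq_zero_null :
    ((gaussianReal 0 1).prod (gaussianReal 0 1)) {z : ℝ × ℝ | z.2 = 0} = 0 := by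
  have h0 : ((gaussianReal 0 1).prod (gaussianReal 0 1)) {z : ℝ × ℝ | z.2 = 0} = 0 := by
    have : {z : ℝ × ℝ | z.2 = 0} = (univ : Set ℝ) ×ˢ ({0} : Set ℝ) := by
      ext ⟨x, y⟩; simp [eq_comm]
    rw [this, Measure.prod_prod]
    have : gaussianReal 0 1 ({0} : Set ℝ) = 0 :=
      gaussianReal_absolutelyContinuous 0 one_ne_zero (measure_singleton 0)
    simp [this]
  exact h0





lemma L'_cont : Continuous L' := by
  apply Continuous.div Real.continuous_exp (by fun_prop)
  intro x; positivity

section Deriv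
variable (ψ0 μ0 : ℝ)

noncomputable def μ2g : Measure (ℝ × ℝ) := (gaussianReal 0 1).prod (gaussianReal 0 1)

instance : IsProbabilityMeasure μ2g := by rw [μ2g]; infer_instance

noncomputable def Q : ℝ → ℝ := fun θ =>
  ∫ z, L (μ0 + ψ0 * z.1) * L (μ0 + ψ0 * (Real.sin θ * z.1 + Real.cos θ * z.2)) ∂μ2g

noncomputable def Dq : ℝ → ℝ := fun θ =>
  ∫ z, L (μ0 + ψ0 * z.1) * (L' (μ0 + ψ0 * (Real.sin θ * z.1 + Real.cos θ * z.2)) *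
    (ψ0 * (Real.cos θ * z.1 - Real.sin θ * z.2))) ∂μ2g

variable (hψ0 : 0 < ψ0)

lemma hasDerivAt_Q (θ0 : ℝ) (hψ0 : 0 < ψ0) :
    HasDerivAt (Q ψ0 μ0) (Dq ψ0 μ0 θ0) θ0 := by
  set F : ℝ → ℝ × ℝ → ℝ := fun θ z =>
    L (μ0 + ψ0 * z.1) * L (μ0 + ψ0 * (Real.sin θ * z.1 + Real.cos θ * z.2)) with hF
  set F' : ℝ → ℝ × ℝ → ℝ := fun θ z =>
    L (μ0 + ψ0 * z.1) * (L' (μ0 + ψ0 * (Real.sin θ * z.1 + Real.cos θ * z.2)) *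
      (ψ0 * (Real.cos θ * z.1 - Real.sin θ * z.2))) with hF'
  have hcont : ∀ θ, Continuous (F θ) := by
    intro θ
    exact (L_cont.comp (by fun_prop)).mul (L_cont.comp (by fun_prop))
  have hcont' : ∀ θ, Continuous (F' θ) := by
    intro θ
    exact (L_cont.comp (by fun_prop)).mul ((L'_cont.comp (by fun_prop)).mul (by fun_prop))
  have key := hasDerivAt_integral_of_dominated_loc_of_deriv_le (μ := μ2g)
    (F := F) (F' := F') (x₀ := θ0) (s := Metric.ball θ0 1) (bound := fun z => ψ0 * (|z.1| + |z.2|))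
    (Metric.ball_mem_nhds θ0 one_pos)
    (Filter.Eventually.of_forall fun θ => (hcont θ).aestronglyMeasurable)
    ?_ ((hcont' θ0).aestronglyMeasurable) ?_ ?_ ?_
  · exact key.2
  · -- integrability of F θ0
    refine (integrable_const (1:ℝ)).mono' ((hcont θ0).aestronglyMeasurable)
      (Filter.Eventually.of_forall fun z => ?_)
    have h1 := L_nonneg (μ0 + ψ0 * z.1)
    have h2 := L_le_one (μ0 + ψ0 * z.1)
    have h3 := L_nonneg (μ0 + ψ0 * (Real.sin θ0 * z.1 + Real.cos θ0 * z.2))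
    have h4 := L_le_one (μ0 + ψ0 * (Real.sin θ0 * z.1 + Real.cos θ0 * z.2))
    rw [Real.norm_eq_abs, abs_mul, abs_of_nonneg h1, abs_of_nonneg h3]
    nlinarith
  · -- bound
    refine Filter.Eventually.of_forall fun z => fun θ _ => ?_
    have h1 := L_nonneg (μ0 + ψ0 * z.1)
    have h2 := L_le_one (μ0 + ψ0 * z.1)
    have h3 := (L'_pos (μ0 + ψ0 * (Real.sin θ * z.1 + Real.cos θ * z.2))).le
    have h4 := L'_le_one (μ0 + ψ0 * (Real.sin θ * z.1 + Real.cos θ * z.2))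
    have h5 : |Real.cos θ * z.1 - Real.sin θ * z.2| ≤ |z.1| + |z.2| := by
      calc |Real.cos θ * z.1 - Real.sin θ * z.2|
          ≤ |Real.cos θ * z.1| + |Real.sin θ * z.2| := abs_sub _ _
        _ = |Real.cos θ| * |z.1| + |Real.sin θ| * |z.2| := by rw [abs_mul, abs_mul]
        _ ≤ 1 * |z.1| + 1 * |z.2| := by
            gcongr
            · exact Real.abs_cos_le_one θ
            · exact Real.abs_sin_le_one θ
        _ = |z.1| + |z.2| := by ring
    rw [Real.norm_eq_abs, abs_mul, abs_mul, abs_mul, abs_of_nonneg h1, abs_of_nonneg h3,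
      abs_of_nonneg hψ0.le]
    have hz1 : (0:ℝ) ≤ |z.1| := abs_nonneg _
    have hz2 : (0:ℝ) ≤ |z.2| := abs_nonneg _
    have hw : (0:ℝ) ≤ |Real.cos θ * z.1 - Real.sin θ * z.2| := abs_nonneg _
    have e0 : (0:ℝ) ≤ ψ0 * |Real.cos θ * z.1 - Real.sin θ * z.2| := mul_nonneg hψ0.le hw
    have e1 : L' (μ0 + ψ0 * (Real.sin θ * z.1 + Real.cos θ * z.2)) *
        (ψ0 * |Real.cos θ * z.1 - Real.sin θ * z.2|) ≤ ψ0 * (|z.1| + |z.2|) := by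
      calc L' (μ0 + ψ0 * (Real.sin θ * z.1 + Real.cos θ * z.2)) *
          (ψ0 * |Real.cos θ * z.1 - Real.sin θ * z.2|)
          ≤ 1 * (ψ0 * |Real.cos θ * z.1 - Real.sin θ * z.2|) :=
            mul_le_mul_of_nonneg_right h4 e0
        _ = ψ0 * |Real.cos θ * z.1 - Real.sin θ * z.2| := one_mul _
        _ ≤ ψ0 * (|z.1| + |z.2|) := mul_le_mul_of_nonneg_left h5 hψ0.le
    calc L (μ0 + ψ0 * z.1) * (L' (μ0 + ψ0 * (Real.sin θ * z.1 + Real.cos θ * z.2)) *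
          (ψ0 * |Real.cos θ * z.1 - Real.sin θ * z.2|))
        ≤ 1 * (L' (μ0 + ψ0 * (Real.sin θ * z.1 + Real.cos θ * z.2)) *
          (ψ0 * |Real.cos θ * z.1 - Real.sin θ * z.2|)) :=
          mul_le_mul_of_nonneg_right h2 (mul_nonneg h3 e0)
      _ = L' (μ0 + ψ0 * (Real.sin θ * z.1 + Real.cos θ * z.2)) *
          (ψ0 * |Real.cos θ * z.1 - Real.sin θ * z.2|) := one_mul _
      _ ≤ ψ0 * (|z.1| + |z.2|) := e1
  · -- bound integrable
    exact ((integrable_fst_gaussian2.abs.add integrable_snd_gaussian2.abs).const_mul ψ0)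
  · -- differentiability
    refine Filter.Eventually.of_forall fun z => fun θ _ => ?_
    have hg : HasDerivAt (fun θ => μ0 + ψ0 * (Real.sin θ * z.1 + Real.cos θ * z.2))
        (ψ0 * (Real.cos θ * z.1 - Real.sin θ * z.2)) θ := by
      have hs := (Real.hasDerivAt_sin θ).mul_const z.1
      have hc := (Real.hasDerivAt_cos θ).mul_const z.2
      have := ((hs.add hc).const_mul ψ0).const_add μ0
      refine this.congr_deriv ?_
      ring
    have hL := (hasDerivAt_L (μ0 + ψ0 * (Real.sin θ * z.1 + Real.cos θ * z.2))).comp θ hg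
    exact hL.const_mul (L (μ0 + ψ0 * z.1))

lemma Dq_pos (θ : ℝ) (hθ : θ ∈ Ioo (-(π/2)) (π/2)) (hψ0 : 0 < ψ0) :
    0 < Dq ψ0 μ0 θ := by
  set s := Real.sin θ with hs
  set c := Real.cos θ with hcdef
  have hc : 0 < c := Real.cos_pos_of_mem_Ioo hθ
  have h1 : s ^ 2 + c ^ 2 = 1 := Real.sin_sq_add_cos_sq θ
  set F2 : ℝ × ℝ → ℝ := fun w =>
    L (μ0 + ψ0 * (s * w.1 + c * w.2)) * (L' (μ0 + ψ0 * w.1) * (ψ0 * w.2)) with hF2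
  have hF2cont : Continuous F2 :=
    (L_cont.comp (by fun_prop)).mul ((L'_cont.comp (by fun_prop)).mul (by fun_prop))
  have hrotF2 : ∀ z : ℝ × ℝ, F2 (rot s c z)
      = L (μ0 + ψ0 * z.1) * (L' (μ0 + ψ0 * (s * z.1 + c * z.2)) *
          (ψ0 * (c * z.1 - s * z.2))) := by
    intro z
    rw [rot_apply]
    show L (μ0 + ψ0 * (s * (s * z.1 + c * z.2) + c * (c * z.1 - s * z.2))) *
        (L' (μ0 + ψ0 * (s * z.1 + c * z.2)) * (ψ0 * (c * z.1 - s * z.2))) = _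
    have harg : s * (s * z.1 + c * z.2) + c * (c * z.1 - s * z.2) = z.1 := by
      linear_combination z.1 * h1
    rw [harg]
  have hDq : Dq ψ0 μ0 θ = ∫ z, F2 z ∂μ2g := by
    rw [Dq, μ2g, ← integral_rot_invariant s c h1 F2 hF2cont.measurable]
    congr 1
    ext z
    rw [hrotF2 z]
  -- split F2 into G + H
  set G : ℝ × ℝ → ℝ := fun w =>
    (L (μ0 + ψ0 * (s * w.1 + c * w.2)) - L (μ0 + ψ0 * (s * w.1))) *
      (L' (μ0 + ψ0 * w.1) * (ψ0 * w.2)) with hG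
  set H : ℝ × ℝ → ℝ := fun w =>
    L (μ0 + ψ0 * (s * w.1)) * (L' (μ0 + ψ0 * w.1) * (ψ0 * w.2)) with hH
  have hsplit : ∀ w, F2 w = G w + H w := by intro w; simp only [hF2, hG, hH]; ring
  have hGcont : Continuous G := ((L_cont.comp (by fun_prop)).sub
    (L_cont.comp (by fun_prop))).mul ((L'_cont.comp (by fun_prop)).mul (by fun_prop))
  have hHcont : Continuous H :=
    (L_cont.comp (by fun_prop)).mul ((L'_cont.comp (by fun_prop)).mul (by fun_prop))
  have hbound : Integrable (fun w : ℝ × ℝ => 2 * (ψ0 * |w.2|)) μ2g :=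
    ((integrable_snd_gaussian2.abs.const_mul ψ0).const_mul 2)
  have habs : ∀ (w : ℝ × ℝ) (a b : ℝ), 0 ≤ a → a ≤ 1 → |b| ≤ 2 →
      |b * (a * (ψ0 * w.2))| ≤ 2 * (ψ0 * |w.2|) := by
    intro w a b ha ha1 hb
    rw [abs_mul, abs_mul, abs_mul, abs_of_nonneg ha, abs_of_nonneg hψ0.le]
    have h2 : (0:ℝ) ≤ ψ0 * |w.2| := mul_nonneg hψ0.le (abs_nonneg _)
    calc |b| * (a * (ψ0 * |w.2|)) ≤ 2 * (a * (ψ0 * |w.2|)) :=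
          mul_le_mul_of_nonneg_right hb (mul_nonneg ha h2)
      _ ≤ 2 * (1 * (ψ0 * |w.2|)) :=
          mul_le_mul_of_nonneg_left (mul_le_mul_of_nonneg_right ha1 h2) (by norm_num)
      _ = 2 * (ψ0 * |w.2|) := by ring
  have hGint : Integrable G μ2g := by
    refine hbound.mono' hGcont.aestronglyMeasurable (Filter.Eventually.of_forall fun w => ?_)
    rw [Real.norm_eq_abs]
    refine habs w _ _ (L'_pos _).le (L'_le_one _) ?_
    have := L_nonneg (μ0 + ψ0 * (s * w.1 + c * w.2))
    have := L_le_one (μ0 + ψ0 * (s * w.1 + c * w.2))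
    have := L_nonneg (μ0 + ψ0 * (s * w.1))
    have := L_le_one (μ0 + ψ0 * (s * w.1))
    rw [abs_le]; constructor <;> linarith
  have hHint : Integrable H μ2g := by
    refine hbound.mono' hHcont.aestronglyMeasurable (Filter.Eventually.of_forall fun w => ?_)
    rw [Real.norm_eq_abs]
    refine habs w _ _ (L'_pos _).le (L'_le_one _) ?_
    have := L_nonneg (μ0 + ψ0 * (s * w.1))
    have := L_le_one (μ0 + ψ0 * (s * w.1))
    rw [abs_le]; constructor <;> linarith
  have hHzero : ∫ w, H w ∂μ2g = 0 := by
    have : ∫ w, H w ∂μ2g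
        = (∫ x, L (μ0 + ψ0 * (s * x)) * L' (μ0 + ψ0 * x) ∂(gaussianReal 0 1)) *
          ∫ y, ψ0 * y ∂(gaussianReal 0 1) := by
      rw [μ2g, ← integral_prod_mul (f := fun x => L (μ0 + ψ0 * (s * x)) * L' (μ0 + ψ0 * x))
        (g := fun y => ψ0 * y)]
      congr 1
      ext w
      simp only [hH]
      ring
    rw [this, integral_const_mul, integral_id_gaussian]
    ring
  have hGnn : ∀ w : ℝ × ℝ, 0 ≤ G w := by
    intro w
    rcases le_or_gt 0 w.2 with hw2 | hw2
    · have harg : μ0 + ψ0 * (s * w.1) ≤ μ0 + ψ0 * (s * w.1 + c * w.2) := by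
        have : (0:ℝ) ≤ c * w.2 := mul_nonneg hc.le hw2
        nlinarith
      exact mul_nonneg (by linarith [L_strictMono.monotone harg])
        (mul_nonneg (L'_pos _).le (mul_nonneg hψ0.le hw2))
    · have harg : μ0 + ψ0 * (s * w.1 + c * w.2) ≤ μ0 + ψ0 * (s * w.1) := by
        have : c * w.2 < 0 := mul_neg_of_pos_of_neg hc hw2
        nlinarith
      refine mul_nonneg_iff.mpr (Or.inr ⟨by linarith [L_strictMono.monotone harg], ?_⟩)
      exact mul_nonpos_of_nonneg_of_nonpos (L'_pos _).le
        (mul_nonpos_of_nonneg_of_nonpos hψ0.le hw2.le)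
  have hGpos : ∀ w : ℝ × ℝ, w.2 ≠ 0 → 0 < G w := by
    intro w hw
    rcases lt_or_gt_of_ne hw with hw2 | hw2
    · have harg : μ0 + ψ0 * (s * w.1 + c * w.2) < μ0 + ψ0 * (s * w.1) := by
        have : c * w.2 < 0 := mul_neg_of_pos_of_neg hc hw2
        nlinarith
      exact mul_pos_of_neg_of_neg (by linarith [L_strictMono harg])
        (mul_neg_of_pos_of_neg (L'_pos _) (mul_neg_of_pos_of_neg hψ0 hw2))
    · have harg : μ0 + ψ0 * (s * w.1) < μ0 + ψ0 * (s * w.1 + c * w.2) := by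
        have : 0 < c * w.2 := mul_pos hc hw2
        nlinarith
      exact mul_pos (by linarith [L_strictMono harg])
        (mul_pos (L'_pos _) (mul_pos hψ0 hw2))
  have hGpos_int : 0 < ∫ w, G w ∂μ2g := by
    rw [integral_pos_iff_support_of_nonneg_ae (Filter.Eventually.of_forall hGnn) hGint]
    have hsub : {w : ℝ × ℝ | w.2 = 0}ᶜ ⊆ Function.support G := by
      intro w hw
      exact (hGpos w hw).ne'
    have hmeas : MeasurableSet {w : ℝ × ℝ | w.2 = 0} :=
      measurable_snd (measurableSet_singleton 0)
    have hcompl : μ2g {w : ℝ × ℝ | w.2 = 0}ᶜ = 1 := by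
      rw [measure_compl hmeas (measure_ne_top _ _)]
      have hnull : μ2g {z : ℝ × ℝ | z.2 = 0} = 0 := snd_eq_zero_null
      rw [measure_univ, hnull, tsub_zero]
    calc (0:ℝ≥0∞) < 1 := zero_lt_one
      _ = μ2g {w : ℝ × ℝ | w.2 = 0}ᶜ := hcompl.symm
      _ ≤ μ2g (Function.support G) := measure_mono hsub
  have : ∫ z, F2 z ∂μ2g = (∫ w, G w ∂μ2g) + ∫ w, H w ∂μ2g := by
    rw [← integral_add hGint hHint]
    exact integral_congr_ae (Filter.Eventually.of_forall fun w => hsplit w)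
  rw [hDq, this, hHzero, add_zero]
  exact hGpos_int

lemma Q_strictMonoOn (hψ0 : 0 < ψ0) :
    StrictMonoOn (Q ψ0 μ0) (Ioo (-(π/2)) (π/2)) := by
  apply strictMonoOn_of_deriv_pos (convex_Ioo _ _)
  · exact fun θ _ => (hasDerivAt_Q ψ0 μ0 θ hψ0).continuousAt.continuousWithinAt
  · intro θ hθ
    rw [interior_Ioo] at hθ
    rw [(hasDerivAt_Q ψ0 μ0 θ hψ0).deriv]
    exact Dq_pos ψ0 μ0 θ hθ hψ0

end Deriv





noncomputable def lg : ℝ → ℝ := fun s => Real.log (s / (1 - s))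

lemma lg_measurable : Measurable lg :=
  Real.measurable_log.comp (measurable_id.div (measurable_const.sub measurable_id))

noncomputable def J : ℝ → ℝ → ℝ≥0∞ := fun a u => if u < 1 ∧ lg u ≤ a then 1 else 0

lemma J_eq_indicator (a : ℝ) :
    (fun u => J a u) = ({u : ℝ | u < 1 ∧ lg u ≤ a}).indicator (fun _ => (1:ℝ≥0∞)) := by
  funext u
  simp only [J, indicator, mem_setOf_eq]

lemma J_set_measurable (a : ℝ) : MeasurableSet {u : ℝ | u < 1 ∧ lg u ≤ a} := by
  refine MeasurableSet.inter (measurableSet_Iio (a := (1:ℝ))) ?_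
  exact measurableSet_le lg_measurable measurable_const

lemma J_measurable (a : ℝ) : Measurable (fun u => J a u) := by
  rw [J_eq_indicator]
  exact measurable_const.indicator (J_set_measurable a)

lemma J_measurable_left (u : ℝ) : Measurable (fun a => J a u) := by
  refine Measurable.ite ?_ measurable_const measurable_const
  by_cases h : u < 1
  · have : {a : ℝ | u < 1 ∧ lg u ≤ a} = Ici (lg u) := by
      ext a; simp [h, mem_Ici]
    rw [this]; exact measurableSet_Ici
  · have : {a : ℝ | u < 1 ∧ lg u ≤ a} = ∅ := by
      ext a; simp [h]
    rw [this]; exact MeasurableSet.empty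

lemma J_lintegral (a : ℝ) : ∫⁻ u in Ioi (0:ℝ), J a u = ENNReal.ofReal (L a) := by
  rw [J_eq_indicator]
  exact (lintegral_indicator_one (J_set_measurable a)).trans (levelset_volume a)

lemma J_joint_measurable : Measurable (fun q : ℝ × ℝ => J q.1 q.2) := by
  have : MeasurableSet {q : ℝ × ℝ | q.2 < 1 ∧ lg q.2 ≤ q.1} :=
    (measurableSet_lt measurable_snd measurable_const).inter
      (measurableSet_le (lg_measurable.comp measurable_snd) measurable_fst)
  exact Measurable.ite this measurable_const measurable_const

section Repr
variable (f g : ℝ × ℝ → ℝ)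

noncomputable def Sset : ℝ → ℝ → Set (ℝ × ℝ) := fun s t => {z : ℝ × ℝ | lg s ≤ f z ∧ lg t ≤ g z}

noncomputable def kfun : ℝ → ℝ → ℝ≥0∞ := fun s t =>
  if s < 1 ∧ t < 1 then μ2g (Sset f g s t) else 0

variable {f g}
variable (hf : Measurable f) (hg : Measurable g)

include hf hg in
lemma Sset_measurable (s t : ℝ) : MeasurableSet (Sset f g s t) :=
  (measurableSet_le measurable_const hf).inter (measurableSet_le measurable_const hg)

include hf hg in
lemma kfun_measurable : Measurable (fun st : ℝ × ℝ => kfun f g st.1 st.2) := by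
  have h1 : MeasurableSet {st : ℝ × ℝ | st.1 < 1 ∧ st.2 < 1} :=
    (measurableSet_lt measurable_fst measurable_const).inter
      (measurableSet_lt measurable_snd measurable_const)
  have h2 : MeasurableSet {w : (ℝ × ℝ) × (ℝ × ℝ) | lg w.1.1 ≤ f w.2 ∧ lg w.1.2 ≤ g w.2} :=
    (measurableSet_le (lg_measurable.comp (measurable_fst.fst)) (hf.comp measurable_snd)).inter
      (measurableSet_le (lg_measurable.comp (measurable_fst.snd)) (hg.comp measurable_snd))
  have h3 : Measurable (fun st : ℝ × ℝ => μ2g (Sset f g st.1 st.2)) :=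
    measurable_measure_prodMk_left (ν := μ2g) h2
  exact Measurable.ite h1 h3 measurable_const

lemma kfun_le (s t : ℝ) : kfun f g s t ≤ (Iio (1:ℝ)).indicator (fun _ => (1:ℝ≥0∞)) t := by
  rw [kfun]
  split_ifs with hc
  · calc μ2g (Sset f g s t) ≤ 1 := prob_le_one
      _ = (Iio (1:ℝ)).indicator (fun _ => (1:ℝ≥0∞)) t :=
          (indicator_of_mem (show t ∈ Iio (1:ℝ) from hc.2) (fun _ => (1:ℝ≥0∞))).symm
  · exact zero_le

lemma kfun_fin (s : ℝ) : (∫⁻ t in Ioi (0:ℝ), kfun f g s t) ≠ ⊤ := by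
  have hIio : ∫⁻ t in Ioi (0:ℝ), (Iio (1:ℝ)).indicator (fun _ => (1:ℝ≥0∞)) t = 1 := by
    have h := lintegral_indicator_one (μ := volume.restrict (Ioi (0:ℝ)))
      (measurableSet_Iio (a := (1:ℝ)))
    rw [show (∫⁻ t in Ioi (0:ℝ), (Iio (1:ℝ)).indicator (fun _ => (1:ℝ≥0∞)) t)
      = ∫⁻ t in Ioi (0:ℝ), (Iio (1:ℝ)).indicator 1 t from rfl, h,
      Measure.restrict_apply' measurableSet_Ioi, Set.Iio_inter_Ioi, Real.volume_Ioo]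
    norm_num
  exact ne_top_of_le_ne_top (by rw [hIio]; exact ENNReal.one_ne_top)
    (lintegral_mono (fun t => kfun_le (f := f) (g := g) s t))

include hf hg in
lemma kfun_eq_lintegral (s t : ℝ) :
    kfun f g s t = ∫⁻ z, J (f z) s * J (g z) t ∂μ2g := by
  rw [kfun]
  split_ifs with hc
  · have heq : ∀ z, J (f z) s * J (g z) t = (Sset f g s t).indicator (fun _ => (1:ℝ≥0∞)) z := by
      intro z
      by_cases h1 : lg s ≤ f z <;> by_cases h2 : lg t ≤ g z <;>
        simp [J, hc.1, hc.2, h1, h2, Sset, indicator, mem_setOf_eq]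
    simp_rw [heq]
    exact (lintegral_indicator_one (Sset_measurable hf hg s t)).symm
  · push_neg at hc
    have heq : ∀ z, J (f z) s * J (g z) t = 0 := by
      intro z
      rcases lt_or_ge s 1 with hs1 | hs1
      · have ht1 := hc hs1
        have ht : J (g z) t = 0 := by simp [J, not_lt.mpr ht1]
        rw [ht, mul_zero]
      · have hs : J (f z) s = 0 := by simp [J, not_lt.mpr hs1]
        rw [hs, zero_mul]
    simp_rw [heq]
    exact lintegral_zero.symm

include hf hg in
/-- Orthant representation, abstract form. -/
lemma repr :
    ∫ s in Ioi (0:ℝ), ∫ t in Ioi (0:ℝ),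
        (if s < 1 ∧ t < 1 then (μ2g (Sset f g s t)).toReal else 0)
      = ∫ z, L (f z) * L (g z) ∂μ2g := by
  -- Step 1: inner integral
  have step1 : ∀ s : ℝ, ∫ t in Ioi (0:ℝ),
      (if s < 1 ∧ t < 1 then (μ2g (Sset f g s t)).toReal else 0)
      = (∫⁻ t in Ioi (0:ℝ), kfun f g s t).toReal := by
    intro s
    have hmeas_t : Measurable fun t => kfun f g s t :=
      (kfun_measurable hf hg).comp (measurable_const.prodMk measurable_id)
    rw [integral_eq_lintegral_of_nonneg_ae]
    · congr 1
      refine lintegral_congr fun t => ?_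
      rw [kfun]
      split_ifs with hc
      · exact ENNReal.ofReal_toReal (measure_ne_top _ _)
      · exact ENNReal.ofReal_zero
    · refine Filter.Eventually.of_forall fun t => ?_
      show (0:ℝ) ≤ if s < 1 ∧ t < 1 then (μ2g (Sset f g s t)).toReal else 0
      split_ifs
      · exact ENNReal.toReal_nonneg
      · exact le_refl 0
    · refine (Measurable.aestronglyMeasurable ?_)
      have h1 : Measurable fun t => (kfun f g s t).toReal := hmeas_t.ennreal_toReal
      have h2 : (fun t => if s < 1 ∧ t < 1 then (μ2g (Sset f g s t)).toReal else 0)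
          = fun t => (kfun f g s t).toReal := by
        funext t
        rw [kfun]
        split_ifs <;> simp
      rw [h2]
      exact h1
  -- Step 2: outer integral
  have houter_meas : Measurable fun s => ∫⁻ t in Ioi (0:ℝ), kfun f g s t :=
    Measurable.lintegral_prod_right' (ν := volume.restrict (Ioi (0:ℝ)))
      (kfun_measurable hf hg)
  have step2 : ∫ s in Ioi (0:ℝ), (∫⁻ t in Ioi (0:ℝ), kfun f g s t).toReal
      = (∫⁻ s in Ioi (0:ℝ), ∫⁻ t in Ioi (0:ℝ), kfun f g s t).toReal := by
    rw [integral_eq_lintegral_of_nonneg_ae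
      (Filter.Eventually.of_forall fun s => ENNReal.toReal_nonneg)
      houter_meas.ennreal_toReal.aestronglyMeasurable]
    congr 1
    exact lintegral_congr fun s => ENNReal.ofReal_toReal (kfun_fin s)
  -- Step 3: inner lintegral as a μ2g lintegral
  have hJf : ∀ s : ℝ, Measurable fun z : ℝ × ℝ => J (f z) s := fun s =>
    (J_measurable_left s).comp hf
  have hJg_t : Measurable fun q : ℝ × (ℝ × ℝ) => J (g q.2) q.1 :=
    J_joint_measurable.comp ((hg.comp measurable_snd).prodMk measurable_fst)
  have step3 : ∀ s : ℝ, ∫⁻ t in Ioi (0:ℝ), kfun f g s t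
      = ∫⁻ z, J (f z) s * ENNReal.ofReal (L (g z)) ∂μ2g := by
    intro s
    have h1 : ∫⁻ t in Ioi (0:ℝ), kfun f g s t
        = ∫⁻ t in Ioi (0:ℝ), ∫⁻ z, J (f z) s * J (g z) t ∂μ2g := by
      exact lintegral_congr fun t => kfun_eq_lintegral hf hg s t
    have hswap := lintegral_lintegral_swap (μ := volume.restrict (Ioi (0:ℝ))) (ν := μ2g)
      (f := fun t z => J (f z) s * J (g z) t)
      (((hJf s).comp measurable_snd).mul hJg_t).aemeasurable
    rw [h1, hswap]
    refine lintegral_congr fun z => ?_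
    rw [lintegral_const_mul (J (f z) s) (J_measurable (g z)), J_lintegral (g z)]
  -- Step 4: outer lintegral as a μ2g lintegral
  have step4 : ∫⁻ s in Ioi (0:ℝ), ∫⁻ z, J (f z) s * ENNReal.ofReal (L (g z)) ∂μ2g
      = ∫⁻ z, ENNReal.ofReal (L (f z)) * ENNReal.ofReal (L (g z)) ∂μ2g := by
    have hLg : Measurable fun z : ℝ × ℝ => ENNReal.ofReal (L (g z)) :=
      ENNReal.measurable_ofReal.comp (L_cont.measurable.comp hg)
    have hJf_s : Measurable fun q : ℝ × (ℝ × ℝ) => J (f q.2) q.1 :=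
      J_joint_measurable.comp ((hf.comp measurable_snd).prodMk measurable_fst)
    have hswap := lintegral_lintegral_swap (μ := volume.restrict (Ioi (0:ℝ))) (ν := μ2g)
      (f := fun s z => J (f z) s * ENNReal.ofReal (L (g z)))
      (hJf_s.mul (hLg.comp measurable_snd)).aemeasurable
    rw [hswap]
    refine lintegral_congr fun z => ?_
    rw [lintegral_mul_const (ENNReal.ofReal (L (g z))) (J_measurable (f z)), J_lintegral (f z)]
  -- Step 5: back to the Bochner integral
  have step5 : (∫⁻ z, ENNReal.ofReal (L (f z)) * ENNReal.ofReal (L (g z)) ∂μ2g).toReal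
      = ∫ z, L (f z) * L (g z) ∂μ2g := by
    rw [integral_eq_lintegral_of_nonneg_ae
      (Filter.Eventually.of_forall fun z => mul_nonneg (L_nonneg _) (L_nonneg _))
      (((L_cont.measurable.comp hf).mul (L_cont.measurable.comp hg)).aestronglyMeasurable)]
    congr 1
    exact lintegral_congr fun z => (ENNReal.ofReal_mul (L_nonneg _)).symm
  calc ∫ s in Ioi (0:ℝ), ∫ t in Ioi (0:ℝ),
        (if s < 1 ∧ t < 1 then (μ2g (Sset f g s t)).toReal else 0)
      = ∫ s in Ioi (0:ℝ), (∫⁻ t in Ioi (0:ℝ), kfun f g s t).toReal := by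
        exact integral_congr_ae (Filter.Eventually.of_forall fun s => step1 s)
    _ = (∫⁻ s in Ioi (0:ℝ), ∫⁻ t in Ioi (0:ℝ), kfun f g s t).toReal := step2
    _ = (∫⁻ s in Ioi (0:ℝ), ∫⁻ z, J (f z) s * ENNReal.ofReal (L (g z)) ∂μ2g).toReal := by
        rw [lintegral_congr fun s => step3 s]
    _ = (∫⁻ z, ENNReal.ofReal (L (f z)) * ENNReal.ofReal (L (g z)) ∂μ2g).toReal := by
        rw [step4]
    _ = ∫ z, L (f z) * L (g z) ∂μ2g := step5

end Repr

end OrthantAux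

/-- For `(X,Y)` centered bivariate normal with common variance `ψ₀² > 0` and
correlation `γ ∈ (-1,1)` (realized as `X = ψ₀ Z₁`, `Y = ψ₀(γ Z₁ + √(1-γ²) Z₂)`
with `Z₁, Z₂` i.i.d. standard normal), the quantity
`p_γ(1,1) = E[h(μ₀+X) h(μ₀+Y)]` (with `h` the logistic function) admits the
orthant-probability representation
`p_γ(1,1) = ∫₀^∞∫₀^∞ P_γ{X ≥ logit s - μ₀, Y ≥ logit t - μ₀} ds dt`
(with the integrand vanishing for `s ≥ 1` or `t ≥ 1`), and `p_γ(1,1)` is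
strictly increasing in `γ` on `(-1,1)`. -/
theorem orthant_representation_and_strictMono
    (ψ0 μ0 : ℝ) (hψ0 : 0 < ψ0)
    (h : ℝ → ℝ) (hdef : ∀ x, h x = Real.exp x / (1 + Real.exp x))
    (logit : ℝ → ℝ) (hlogit : ∀ s, logit s = Real.log (s / (1 - s)))
    (μ2 : Measure (ℝ × ℝ)) (hμ2 : μ2 = (gaussianReal 0 1).prod (gaussianReal 0 1))
    (p : ℝ → ℝ)
    (hp : ∀ γ : ℝ, p γ = ∫ z : ℝ × ℝ,
        h (μ0 + ψ0 * z.1) * h (μ0 + ψ0 * (γ * z.1 + Real.sqrt (1 - γ ^ 2) * z.2)) ∂μ2) :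
    (∀ γ ∈ Ioo (-1:ℝ) 1, p γ =
      ∫ s in Ioi (0:ℝ), ∫ t in Ioi (0:ℝ),
        (if s < 1 ∧ t < 1 then
          (μ2 {z : ℝ × ℝ | ψ0 * z.1 ≥ logit s - μ0 ∧
            ψ0 * (γ * z.1 + Real.sqrt (1 - γ ^ 2) * z.2) ≥ logit t - μ0}).toReal
         else 0)) ∧
    StrictMonoOn p (Ioo (-1:ℝ) 1) := by
  have hLfun : h = OrthantAux.L := funext fun x => hdef x
  have hlgfun : logit = OrthantAux.lg := funext fun s => hlogit s
  have hμ2g : (gaussianReal 0 1).prod (gaussianReal 0 1) = OrthantAux.μ2g := rfl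
  subst hLfun hlgfun hμ2
  constructor
  · -- orthant representation
    intro γ hγ
    have hf1m : Measurable (fun z : ℝ × ℝ => μ0 + ψ0 * z.1) := by fun_prop
    have hg1m : Measurable
        (fun z : ℝ × ℝ => μ0 + ψ0 * (γ * z.1 + Real.sqrt (1 - γ ^ 2) * z.2)) := by fun_prop
    have hrepr := OrthantAux.repr (f := fun z : ℝ × ℝ => μ0 + ψ0 * z.1)
      (g := fun z : ℝ × ℝ => μ0 + ψ0 * (γ * z.1 + Real.sqrt (1 - γ ^ 2) * z.2)) hf1m hg1m
    have hset : ∀ s t : ℝ, {z : ℝ × ℝ | ψ0 * z.1 ≥ OrthantAux.lg s - μ0 ∧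
        ψ0 * (γ * z.1 + Real.sqrt (1 - γ ^ 2) * z.2) ≥ OrthantAux.lg t - μ0}
        = OrthantAux.Sset (fun z : ℝ × ℝ => μ0 + ψ0 * z.1)
            (fun z : ℝ × ℝ => μ0 + ψ0 * (γ * z.1 + Real.sqrt (1 - γ ^ 2) * z.2)) s t := by
      intro s t
      ext z
      simp only [OrthantAux.Sset, mem_setOf_eq, ge_iff_le]
      constructor
      · rintro ⟨h1, h2⟩
        exact ⟨by linarith, by linarith⟩
      · rintro ⟨h1, h2⟩
        exact ⟨by linarith, by linarith⟩
    rw [hp γ, hμ2g]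
    simp_rw [hset]
    exact hrepr.symm
  · -- strict monotonicity
    have hmem : ∀ γ ∈ Ioo (-1:ℝ) 1, Real.arcsin γ ∈ Ioo (-(π/2)) (π/2) := fun γ hγ =>
      ⟨Real.neg_pi_div_two_lt_arcsin.mpr hγ.1, Real.arcsin_lt_pi_div_two.mpr hγ.2⟩
    have hQeq : ∀ γ ∈ Ioo (-1:ℝ) 1, p γ = OrthantAux.Q ψ0 μ0 (Real.arcsin γ) := by
      intro γ hγ
      rw [hp γ, hμ2g, OrthantAux.Q]
      congr 1
      funext z
      rw [Real.sin_arcsin hγ.1.le hγ.2.le, Real.cos_arcsin]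
    intro a ha b hb hab
    rw [hQeq a ha, hQeq b hb]
    exact OrthantAux.Q_strictMonoOn ψ0 μ0 hψ0 (hmem a ha) (hmem b hb)
      (Real.strictMonoOn_arcsin ⟨ha.1.le, ha.2.le⟩ ⟨hb.1.le, hb.2.le⟩ hab)
end

section
/- Consider the mixed logistic model of the open problem: given i.i.d. random effects $u_1,\ldots,u_m \sim N(0,1)$ and $v_1,\ldots,v_n \sim N(0,1)$, mutually independent, binary responses $y_{ij}$, $1\le i\le m$, $1\le j\le n$, are conditionally independent with $\mathrm{logit}\,P(y_{ij}=1\mid u,v) = \mu + u_i + v_j$. Then as $m,n \to \infty$, there is, with probability tending to one, a root $\hat\mu$ of the likelihood equation such that $\hat\mu \to \mu$ in probability. -/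
open ProbabilityTheory MeasureTheory Filter

/-- Marginal likelihood of the mixed logistic model of the open problem. -/
noncomputable def mixedLogisticLik (m n : ℕ) (μ : ℝ) (y : Fin m → Fin n → Bool) : ℝ :=
  ∫ u : Fin m → ℝ, ∫ v : Fin n → ℝ,
    (∏ i, ∏ j,
      (if y i j then Real.exp (μ + u i + v j) / (1 + Real.exp (μ + u i + v j))
       else 1 - Real.exp (μ + u i + v j) / (1 + Real.exp (μ + u i + v j))))
    ∂(Measure.pi fun _ : Fin n => gaussianReal 0 1)
    ∂(Measure.pi fun _ : Fin m => gaussianReal 0 1)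

noncomputable section CramerAux
namespace CramerAux

/-- the logistic function -/
def lg (x : ℝ) : ℝ := Real.exp x / (1 + Real.exp x)

lemma one_add_exp_pos (x : ℝ) : 0 < 1 + Real.exp x := by positivity

lemma lg_pos (x : ℝ) : 0 < lg x := div_pos (Real.exp_pos x) (one_add_exp_pos x)

lemma lg_lt_one (x : ℝ) : lg x < 1 := by
  rw [lg, div_lt_one (one_add_exp_pos x)]; linarith [Real.exp_pos x]

lemma lg_mono {x y : ℝ} (h : x < y) : lg x < lg y := by
  rw [lg, lg, div_lt_div_iff₀ (one_add_exp_pos x) (one_add_exp_pos y)]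
  have h2 := Real.exp_lt_exp.2 h
  nlinarith [Real.exp_pos x, Real.exp_pos y]

lemma lg_cont : Continuous lg :=
  Real.continuous_exp.div (by continuity) (fun x => (one_add_exp_pos x).ne')

/-- Bernoulli weight -/
def w (b : Bool) (x : ℝ) : ℝ := if b then lg x else 1 - lg x

lemma w_pos (b : Bool) (x : ℝ) : 0 < w b x := by
  cases b <;> simp [w]
  · linarith [lg_lt_one x]
  · exact lg_pos x

lemma w_le_one (b : Bool) (x : ℝ) : w b x ≤ 1 := by
  cases b <;> simp [w]
  · linarith [lg_pos x]
  · linarith [lg_lt_one x]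

lemma w_cont (b : Bool) : Continuous (w b) := by
  have h1 : Continuous (fun x => 1 - lg x) := continuous_const.sub lg_cont
  cases b
  · exact h1
  · exact lg_cont

lemma w_sum (x : ℝ) : w true x + w false x = 1 := by simp [w]

section Meas

lemma integrable_bdd {α : Type*} [MeasurableSpace α] [TopologicalSpace α]
    [OpensMeasurableSpace α] (μ : Measure α) [IsFiniteMeasure μ] {f : α → ℝ}
    (hc : Continuous f) (C : ℝ) (hb : ∀ x, ‖f x‖ ≤ C) : Integrable f μ :=
  (integrable_const C).mono' hc.aestronglyMeasurable (Filter.Eventually.of_forall hb)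

lemma integral_pos_of_cont {α : Type*} [MeasurableSpace α] [TopologicalSpace α]
    [OpensMeasurableSpace α] (μ : Measure α) [IsProbabilityMeasure μ] {f : α → ℝ}
    (hc : Continuous f) (hpos : ∀ x, 0 < f x) (C : ℝ) (hb : ∀ x, ‖f x‖ ≤ C) :
    0 < ∫ x, f x ∂μ := by
  rw [integral_pos_iff_support_of_nonneg_ae
    (Filter.Eventually.of_forall fun x => (hpos x).le) (integrable_bdd μ hc C hb)]
  have hs : Function.support f = Set.univ := Set.eq_univ_of_forall fun p => (hpos p).ne'
  simp [hs]

end Meas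

section Lik

/-- standard gaussian -/
abbrev gauss : Measure ℝ := gaussianReal 0 1

/-- the joint integrand on the product space -/
def F (m n : ℕ) (t : ℝ) (y : Fin m → Fin n → Bool) (p : (Fin m → ℝ) × (Fin n → ℝ)) : ℝ :=
  ∏ i, ∏ j, w (y i j) (t + p.1 i + p.2 j)

lemma F_cont (m n : ℕ) (t : ℝ) (y : Fin m → Fin n → Bool) : Continuous (F m n t y) := by
  apply continuous_finset_prod
  intro i _
  apply continuous_finset_prod
  intro j _
  exact (w_cont (y i j)).comp
    ((continuous_const.add ((continuous_apply i).comp continuous_fst)).add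
      ((continuous_apply j).comp continuous_snd))

lemma F_cont_t (m n : ℕ) (y : Fin m → Fin n → Bool) (p : (Fin m → ℝ) × (Fin n → ℝ)) :
    Continuous (fun t => F m n t y p) := by
  apply continuous_finset_prod
  intro i _
  apply continuous_finset_prod
  intro j _
  exact (w_cont (y i j)).comp ((continuous_id.add continuous_const).add continuous_const)

lemma F_pos (m n : ℕ) (t : ℝ) (y : Fin m → Fin n → Bool) (p : (Fin m → ℝ) × (Fin n → ℝ)) :
    0 < F m n t y p :=
  Finset.prod_pos fun i _ => Finset.prod_pos fun j _ => w_pos _ _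

lemma F_le_one (m n : ℕ) (t : ℝ) (y : Fin m → Fin n → Bool) (p : (Fin m → ℝ) × (Fin n → ℝ)) :
    F m n t y p ≤ 1 :=
  Finset.prod_le_one (fun i _ => (Finset.prod_pos fun j _ => w_pos _ _).le)
    (fun i _ => Finset.prod_le_one (fun j _ => (w_pos _ _).le) (fun j _ => w_le_one _ _))

lemma F_norm_le (m n : ℕ) (t : ℝ) (y : Fin m → Fin n → Bool) (p : (Fin m → ℝ) × (Fin n → ℝ)) :
    ‖F m n t y p‖ ≤ 1 := by
  rw [Real.norm_eq_abs, abs_of_pos (F_pos m n t y p)]; exact F_le_one m n t y p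

lemma F_integrable (m n : ℕ) (t : ℝ) (y : Fin m → Fin n → Bool) :
    Integrable (F m n t y)
      ((Measure.pi fun _ : Fin m => gauss).prod (Measure.pi fun _ : Fin n => gauss)) :=
  integrable_bdd _ (F_cont m n t y) 1 (F_norm_le m n t y)

lemma lik_eq (m n : ℕ) (t : ℝ) (y : Fin m → Fin n → Bool) :
    mixedLogisticLik m n t y
      = ∫ p, F m n t y p
          ∂((Measure.pi fun _ : Fin m => gauss).prod (Measure.pi fun _ : Fin n => gauss)) := by
  rw [mixedLogisticLik]
  exact MeasureTheory.integral_integral (f := fun u v => F m n t y (u, v))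
    (F_integrable m n t y)

lemma lik_pos (m n : ℕ) (t : ℝ) (y : Fin m → Fin n → Bool) :
    0 < mixedLogisticLik m n t y := by
  rw [lik_eq]
  exact integral_pos_of_cont _ (F_cont m n t y) (F_pos m n t y) 1 (F_norm_le m n t y)

lemma lik_cont (m n : ℕ) (y : Fin m → Fin n → Bool) :
    Continuous (fun t => mixedLogisticLik m n t y) := by
  have he : (fun t => mixedLogisticLik m n t y)
      = fun t => ∫ p, F m n t y p
          ∂((Measure.pi fun _ : Fin m => gauss).prod (Measure.pi fun _ : Fin n => gauss)) :=
    funext fun t => lik_eq m n t y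
  rw [he]
  apply continuous_of_dominated (bound := fun _ => (1:ℝ))
    (fun t => (F_cont m n t y).aestronglyMeasurable)
    (fun t => Filter.Eventually.of_forall (F_norm_le m n t y))
    (integrable_const 1)
    (Filter.Eventually.of_forall fun p => F_cont_t m n y p)

end Lik

section Root

lemma exists_root (m n : ℕ) (y : Fin m → Fin n → Bool) (μ ε : ℝ) (hε : 0 < ε)
    (h1 : mixedLogisticLik m n (μ - ε/2) y < mixedLogisticLik m n μ y)
    (h2 : mixedLogisticLik m n (μ + ε/2) y < mixedLogisticLik m n μ y) :
    ∃ r : ℝ, |r - μ| < ε ∧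
      deriv (fun t => Real.log (mixedLogisticLik m n t y)) r = 0 := by
  set f : ℝ → ℝ := fun t => Real.log (mixedLogisticLik m n t y) with hf
  have hcont : Continuous f :=
    (lik_cont m n y).log (fun t => (lik_pos m n t y).ne')
  have hmem : μ ∈ Set.Icc (μ - ε/2) (μ + ε/2) := by
    constructor <;> [linarith; linarith]
  obtain ⟨r, hr, hrmax⟩ := isCompact_Icc.exists_isMaxOn ⟨μ, hmem⟩ hcont.continuousOn
  have hfr : f μ ≤ f r := hrmax hmem
  have hlt1 : f (μ - ε/2) < f μ := Real.log_lt_log (lik_pos m n _ y) h1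
  have hlt2 : f (μ + ε/2) < f μ := Real.log_lt_log (lik_pos m n _ y) h2
  have hne1 : r ≠ μ - ε/2 := fun h => absurd hfr (by rw [h]; linarith)
  have hne2 : r ≠ μ + ε/2 := fun h => absurd hfr (by rw [h]; linarith)
  have hr' : r ∈ Set.Ioo (μ - ε/2) (μ + ε/2) := by
    rcases hr with ⟨h1', h2'⟩
    exact ⟨lt_of_le_of_ne h1' (Ne.symm hne1), lt_of_le_of_ne h2' hne2⟩
  have hloc : IsLocalMax f r :=
    hrmax.isLocalMax (Icc_mem_nhds hr'.1 hr'.2)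
  refine ⟨r, ?_, hloc.deriv_eq_zero⟩
  rw [abs_sub_lt_iff]
  constructor <;> [linarith [hr'.2]; linarith [hr'.1]]

end Root

section Comb

lemma sum_pi_prod {ι β : Type*} [Fintype ι] [DecidableEq ι] [Fintype β] [DecidableEq β]
    (F : ι → β → ℝ) :
    ∑ y : ι → β, ∏ i, F i (y i) = ∏ i, ∑ b, F i b := by
  rw [Finset.prod_univ_sum]
  rw [Fintype.piFinset_univ]

lemma prod_fin_restrict {M : Type*} [CommMonoid M] {k m : ℕ} (hkm : k ≤ m) (c : ℕ → M) :
    ∏ i : Fin m, (if (i : ℕ) < k then c i else 1) = ∏ i : Fin k, c i := by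
  rw [Fin.prod_univ_eq_prod_range (fun x => if x < k then c x else 1) m,
    Fin.prod_univ_eq_prod_range (fun x => c x) k]
  rw [← Finset.prod_filter]
  congr 1
  ext x
  simp only [Finset.mem_filter, Finset.mem_range]
  omega

/-- embedding of the diagonal index -/
def em (m n : ℕ) : Fin (min m n) → Fin m := Fin.castLE (min_le_left m n)
def en (m n : ℕ) : Fin (min m n) → Fin n := Fin.castLE (min_le_right m n)

/-- diagonal of a data configuration -/
def dg (m n : ℕ) (y : Fin m → Fin n → Bool) : Fin (min m n) → Bool :=
  fun i => y (em m n i) (en m n i)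

def cAux {m n : ℕ} (W : Fin m → Fin n → Bool → ℝ) (d : Fin (min m n) → Bool) (x : ℕ) : ℝ :=
  if hx : x < min m n then
    W ⟨x, lt_of_lt_of_le hx (min_le_left m n)⟩ (en m n ⟨x, hx⟩) (d ⟨x, hx⟩)
  else 1

def gAux {m n : ℕ} (W : Fin m → Fin n → Bool → ℝ) (d : Fin (min m n) → Bool)
    (i : Fin m) (j : Fin n) (b : Bool) : ℝ :=
  if h : (i : ℕ) = (j : ℕ) ∧ (i : ℕ) < min m n then
    (if b = d ⟨(i : ℕ), h.2⟩ then W i j b else 0)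
  else W i j b

lemma sum_diag_fiber {m n : ℕ} (W : Fin m → Fin n → Bool → ℝ)
    (hW : ∀ i j, W i j true + W i j false = 1) (d : Fin (min m n) → Bool) :
    ∑ y ∈ Finset.univ.filter (fun y : Fin m → Fin n → Bool => dg m n y = d),
      ∏ i, ∏ j, W i j (y i j)
      = ∏ i : Fin (min m n), W (em m n i) (en m n i) (d i) := by
  classical
  have step1 : ∀ y : Fin m → Fin n → Bool,
      ∏ i, ∏ j, gAux W d i j (y i j)
        = if dg m n y = d then ∏ i, ∏ j, W i j (y i j) else 0 := by
    intro y
    by_cases hy : dg m n y = d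
    · rw [if_pos hy]
      apply Finset.prod_congr rfl
      intro i _
      apply Finset.prod_congr rfl
      intro j _
      rw [gAux]
      by_cases h : (i : ℕ) = (j : ℕ) ∧ (i : ℕ) < min m n
      · rw [dif_pos h]
        have hemi : em m n ⟨(i : ℕ), h.2⟩ = i := by
          apply Fin.ext; rfl
        have heni : en m n ⟨(i : ℕ), h.2⟩ = j := by
          apply Fin.ext; exact h.1
        have hyd : y i j = d ⟨(i : ℕ), h.2⟩ := by
          rw [← hy, dg, hemi, heni]
        rw [if_pos hyd]
      · rw [dif_neg h]
    · rw [if_neg hy]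
      obtain ⟨i0, hi0⟩ := Function.ne_iff.1 hy
      apply Finset.prod_eq_zero (Finset.mem_univ (em m n i0))
      apply Finset.prod_eq_zero (Finset.mem_univ (en m n i0))
      rw [gAux]
      have h : ((em m n i0 : Fin m) : ℕ) = ((en m n i0 : Fin n) : ℕ)
          ∧ ((em m n i0 : Fin m) : ℕ) < min m n := ⟨rfl, i0.2⟩
      rw [dif_pos h]
      have hidx : (⟨((em m n i0 : Fin m) : ℕ), h.2⟩ : Fin (min m n)) = i0 := by
        apply Fin.ext; rfl
      rw [hidx]
      exact if_neg fun hc => hi0 hc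
  calc ∑ y ∈ Finset.univ.filter (fun y : Fin m → Fin n → Bool => dg m n y = d),
          ∏ i, ∏ j, W i j (y i j)
      = ∑ y : Fin m → Fin n → Bool,
          if dg m n y = d then ∏ i, ∏ j, W i j (y i j) else 0 := Finset.sum_filter _ _
    _ = ∑ y : Fin m → Fin n → Bool, ∏ i, ∏ j, gAux W d i j (y i j) := by
        apply Finset.sum_congr rfl; intro y _; rw [step1 y]
    _ = ∏ i : Fin m, ∑ z : Fin n → Bool, ∏ j, gAux W d i j (z j) :=
        sum_pi_prod (fun i (z : Fin n → Bool) => ∏ j, gAux W d i j (z j))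
    _ = ∏ i : Fin m, ∏ j : Fin n, ∑ b : Bool, gAux W d i j b := by
        apply Finset.prod_congr rfl; intro i _
        exact sum_pi_prod (fun j (b : Bool) => gAux W d i j b)
    _ = ∏ i : Fin m, ∏ j : Fin n,
          (if h : (i : ℕ) = (j : ℕ) ∧ (i : ℕ) < min m n then W i j (d ⟨(i : ℕ), h.2⟩)
           else 1) := by
        apply Finset.prod_congr rfl; intro i _
        apply Finset.prod_congr rfl; intro j _
        by_cases h : (i : ℕ) = (j : ℕ) ∧ (i : ℕ) < min m n
        · rw [dif_pos h, Fintype.sum_bool, gAux, gAux, dif_pos h, dif_pos h]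
          cases hd : d ⟨(i : ℕ), h.2⟩ <;> simp [hd]
        · rw [dif_neg h, Fintype.sum_bool, gAux, gAux, dif_neg h, dif_neg h]
          exact hW i j
    _ = ∏ i : Fin m,
          (if hik : (i : ℕ) < min m n then
            W i (en m n ⟨(i : ℕ), hik⟩) (d ⟨(i : ℕ), hik⟩) else 1) := by
        apply Finset.prod_congr rfl; intro i _
        by_cases hik : (i : ℕ) < min m n
        · rw [dif_pos hik]
          rw [Finset.prod_eq_single (en m n ⟨(i : ℕ), hik⟩)]
          · have h : (i : ℕ) = ((en m n ⟨(i : ℕ), hik⟩ : Fin n) : ℕ) ∧ (i : ℕ) < min m n :=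
              ⟨rfl, hik⟩
            rw [dif_pos h]
          · intro j _ hj
            have h : ¬ ((i : ℕ) = (j : ℕ) ∧ (i : ℕ) < min m n) := by
              rintro ⟨h1, -⟩
              exact hj (Fin.ext h1.symm)
            rw [dif_neg h]
          · intro habs
            exact absurd (Finset.mem_univ _) habs
        · rw [dif_neg hik]
          apply Finset.prod_eq_one
          intro j _
          have h : ¬ ((i : ℕ) = (j : ℕ) ∧ (i : ℕ) < min m n) := fun h => hik h.2
          rw [dif_neg h]
    _ = ∏ i : Fin m, (if (i : ℕ) < min m n then cAux W d ↑i else 1) := by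
        apply Finset.prod_congr rfl; intro i _
        by_cases hik : (i : ℕ) < min m n
        · rw [dif_pos hik, if_pos hik]
          simp only [cAux]
          rw [dif_pos hik]
        · rw [dif_neg hik, if_neg hik]
    _ = ∏ x : Fin (min m n), cAux W d ↑x := prod_fin_restrict (min_le_left m n) (cAux W d)
    _ = ∏ i : Fin (min m n), W (em m n i) (en m n i) (d i) := by
        apply Finset.prod_congr rfl; intro x _
        simp only [cAux]
        rw [dif_pos x.2]
        rfl

end Comb

section Marg

lemma integral_pi_gauss {m : ℕ} (f : Fin m → ℝ → ℝ) :
    ∫ x : Fin m → ℝ, ∏ i, f i (x i) ∂(Measure.pi fun _ : Fin m => gauss)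
      = ∏ i, ∫ x, f i x ∂gauss := by
  letI : MeasureSpace ℝ := ⟨gauss⟩
  haveI : SigmaFinite (volume : Measure ℝ) := inferInstanceAs (SigmaFinite gauss)
  exact MeasureTheory.integral_fin_nat_prod_eq_prod f

/-- the inner Gaussian smoothing of a Bernoulli weight -/
def gq (b : Bool) (c : ℝ) : ℝ := ∫ z, w b (c + z) ∂gauss

/-- the marginal success/failure probability of a diagonal observation -/
def q (t : ℝ) (b : Bool) : ℝ := ∫ a, gq b (t + a) ∂gauss

lemma gq_le_one (b : Bool) (c : ℝ) : gq b c ≤ 1 := by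
  rw [gq]
  calc ∫ z, w b (c + z) ∂gauss ≤ ∫ _z, (1:ℝ) ∂gauss := by
        apply integral_mono_of_nonneg (Filter.Eventually.of_forall fun z => (w_pos b (c+z)).le)
          (integrable_const 1) (Filter.Eventually.of_forall fun z => w_le_one b (c+z))
    _ = 1 := by simp
  
lemma gq_pos (b : Bool) (c : ℝ) : 0 < gq b c := by
  rw [gq]
  exact integral_pos_of_cont _ ((w_cont b).comp (continuous_const.add continuous_id))
    (fun z => w_pos _ _) 1
    (fun z => by rw [Real.norm_eq_abs, abs_of_pos (w_pos _ _)]; exact w_le_one _ _)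

lemma gq_cont (b : Bool) : Continuous (gq b) := by
  apply continuous_of_dominated (bound := fun _ => (1:ℝ))
  · exact fun c => ((w_cont b).comp (continuous_const.add continuous_id)).aestronglyMeasurable
  · exact fun c => Filter.Eventually.of_forall fun z => by
      rw [Real.norm_eq_abs, abs_of_pos (w_pos _ _)]; exact w_le_one _ _
  · exact integrable_const 1
  · exact Filter.Eventually.of_forall fun z =>
      (w_cont b).comp (continuous_id.add continuous_const)

lemma q_pos (t : ℝ) (b : Bool) : 0 < q t b := by
  rw [q]
  exact integral_pos_of_cont _ ((gq_cont b).comp (continuous_const.add continuous_id))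
    (fun a => gq_pos _ _) 1
    (fun a => by rw [Real.norm_eq_abs, abs_of_pos (gq_pos _ _)]; exact gq_le_one _ _)

/-- the diagonal marginal success probability -/
def p0 (t : ℝ) : ℝ := q t true

lemma q_false (t : ℝ) : q t false = 1 - p0 t := by
  have hwint : ∀ c : ℝ, Integrable (fun z => w true (c + z)) gauss := fun c =>
    integrable_bdd _ ((w_cont true).comp (continuous_const.add continuous_id)) 1
      (fun z => by rw [Real.norm_eq_abs, abs_of_pos (w_pos _ _)]; exact w_le_one _ _)
  have hgq : ∀ c : ℝ, gq false c = 1 - gq true c := by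
    intro c
    rw [gq, gq]
    have : (fun z => w false (c + z)) = fun z => 1 - w true (c + z) := by
      funext z; simp [w]
    rw [this, integral_sub (integrable_const 1) (hwint c)]
    simp
  rw [q, p0, q]
  have : (fun a => gq false (t + a)) = fun a => 1 - gq true (t + a) := by
    funext a; rw [hgq]
  rw [this, integral_sub (integrable_const 1)]
  · simp
  · exact integrable_bdd _ ((gq_cont true).comp (continuous_const.add continuous_id)) 1
      (fun a => by rw [Real.norm_eq_abs, abs_of_pos (gq_pos _ _)]; exact gq_le_one _ _)

lemma p0_pos (t : ℝ) : 0 < p0 t := q_pos t true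

lemma p0_lt_one (t : ℝ) : p0 t < 1 := by
  have := q_pos t false
  rw [q_false] at this
  linarith

lemma p0_mono {s t : ℝ} (h : s < t) : p0 s < p0 t := by
  have hgq : ∀ c c' : ℝ, c < c' → gq true c < gq true c' := by
    intro c c' hcc
    rw [gq, gq, ← sub_pos, ← integral_sub]
    · refine integral_pos_of_cont _ ?_ ?_ 2 ?_
      · exact ((w_cont true).comp (continuous_const.add continuous_id)).sub
          ((w_cont true).comp (continuous_const.add continuous_id))
      · intro z
        have : w true (c + z) < w true (c' + z) := by
          simp only [w, if_true]
          exact lg_mono (by linarith)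
        linarith
      · intro z
        rw [Real.norm_eq_abs, abs_le]
        constructor <;> nlinarith [w_pos true (c' + z), w_le_one true (c' + z),
          w_pos true (c + z), w_le_one true (c + z)]
    · exact integrable_bdd _ ((w_cont true).comp (continuous_const.add continuous_id)) 1
        (fun z => by rw [Real.norm_eq_abs, abs_of_pos (w_pos _ _)]; exact w_le_one _ _)
    · exact integrable_bdd _ ((w_cont true).comp (continuous_const.add continuous_id)) 1
        (fun z => by rw [Real.norm_eq_abs, abs_of_pos (w_pos _ _)]; exact w_le_one _ _)
  rw [p0, p0, q, q, ← sub_pos, ← integral_sub]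
  · refine integral_pos_of_cont _ ?_ ?_ 2 ?_
    · exact ((gq_cont true).comp (continuous_const.add continuous_id)).sub
        ((gq_cont true).comp (continuous_const.add continuous_id))
    · intro a
      have := hgq (s + a) (t + a) (by linarith)
      linarith
    · intro a
      rw [Real.norm_eq_abs, abs_le]
      constructor <;> nlinarith [gq_pos true (t + a), gq_le_one true (t + a),
        gq_pos true (s + a), gq_le_one true (s + a)]
  · exact integrable_bdd _ ((gq_cont true).comp (continuous_const.add continuous_id)) 1
      (fun a => by rw [Real.norm_eq_abs, abs_of_pos (gq_pos _ _)]; exact gq_le_one _ _)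
  · exact integrable_bdd _ ((gq_cont true).comp (continuous_const.add continuous_id)) 1
      (fun a => by rw [Real.norm_eq_abs, abs_of_pos (gq_pos _ _)]; exact gq_le_one _ _)

lemma int_prod_split {m n : ℕ} (G : (Fin m → ℝ) × (Fin n → ℝ) → ℝ)
    (hGint : Integrable G
      ((Measure.pi fun _ : Fin m => gauss).prod (Measure.pi fun _ : Fin n => gauss))) :
    (∫ p, G p ∂((Measure.pi fun _ : Fin m => gauss).prod (Measure.pi fun _ : Fin n => gauss)))
    = ∫ u : Fin m → ℝ, (∫ v : Fin n → ℝ, G (u, v)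
        ∂(Measure.pi fun _ : Fin n => gauss)) ∂(Measure.pi fun _ : Fin m => gauss) :=
  (MeasureTheory.integral_integral (f := fun u v => G (u, v)) hGint).symm

def fV {m n : ℕ} (t : ℝ) (d : Fin (min m n) → Bool) (u : Fin m → ℝ) (j : Fin n) (z : ℝ) : ℝ :=
  if hj : (j : ℕ) < min m n then w (d ⟨(j : ℕ), hj⟩) (t + u (em m n ⟨(j : ℕ), hj⟩) + z) else 1

def cV {m n : ℕ} (t : ℝ) (d : Fin (min m n) → Bool) (u : Fin m → ℝ) (v : Fin n → ℝ) (x : ℕ) : ℝ :=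
  if hx : x < min m n then
    w (d ⟨x, hx⟩) (t + u (em m n ⟨x, hx⟩) + v (en m n ⟨x, hx⟩)) else 1

def cU {m n : ℕ} (t : ℝ) (d : Fin (min m n) → Bool) (u : Fin m → ℝ) (x : ℕ) : ℝ :=
  if hx : x < min m n then gq (d ⟨x, hx⟩) (t + u (em m n ⟨x, hx⟩)) else 1

def fU {m n : ℕ} (t : ℝ) (d : Fin (min m n) → Bool) (i' : Fin m) (a : ℝ) : ℝ :=
  if hi : (i' : ℕ) < min m n then gq (d ⟨(i' : ℕ), hi⟩) (t + a) else 1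

def cQ {m n : ℕ} (t : ℝ) (d : Fin (min m n) → Bool) (x : ℕ) : ℝ :=
  if hx : x < min m n then q t (d ⟨x, hx⟩) else 1

set_option maxHeartbeats 2000000 in
lemma marg (m n : ℕ) (t : ℝ) (d : Fin (min m n) → Bool) :
    ∑ y ∈ Finset.univ.filter (fun y : Fin m → Fin n → Bool => dg m n y = d),
      mixedLogisticLik m n t y
      = ∏ i : Fin (min m n), q t (d i) := by
  classical
  have hGcont : Continuous (fun p : (Fin m → ℝ) × (Fin n → ℝ) =>
      ∏ i : Fin (min m n), w (d i) (t + p.1 (em m n i) + p.2 (en m n i))) := by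
    apply continuous_finset_prod
    intro i _
    exact (w_cont (d i)).comp
      ((continuous_const.add ((continuous_apply (em m n i)).comp continuous_fst)).add
        ((continuous_apply (en m n i)).comp continuous_snd))
  have hGbd : ∀ p : (Fin m → ℝ) × (Fin n → ℝ),
      ‖∏ i : Fin (min m n), w (d i) (t + p.1 (em m n i) + p.2 (en m n i))‖ ≤ 1 := by
    intro p
    rw [Real.norm_eq_abs, abs_of_pos (Finset.prod_pos fun i _ => w_pos _ _)]
    exact Finset.prod_le_one (fun i _ => (w_pos _ _).le) (fun i _ => w_le_one _ _)
  have hGint : Integrable (fun p : (Fin m → ℝ) × (Fin n → ℝ) =>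
      ∏ i : Fin (min m n), w (d i) (t + p.1 (em m n i) + p.2 (en m n i)))
      ((Measure.pi fun _ : Fin m => gauss).prod (Measure.pi fun _ : Fin n => gauss)) :=
    integrable_bdd _ hGcont 1 hGbd
  calc ∑ y ∈ Finset.univ.filter (fun y : Fin m → Fin n → Bool => dg m n y = d),
        mixedLogisticLik m n t y
      = ∑ y ∈ Finset.univ.filter (fun y : Fin m → Fin n → Bool => dg m n y = d),
          ∫ p, F m n t y p
            ∂((Measure.pi fun _ : Fin m => gauss).prod (Measure.pi fun _ : Fin n => gauss)) :=
        Finset.sum_congr rfl fun y _ => lik_eq m n t y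
    _ = ∫ p, (∑ y ∈ Finset.univ.filter (fun y : Fin m → Fin n → Bool => dg m n y = d),
          F m n t y p)
            ∂((Measure.pi fun _ : Fin m => gauss).prod (Measure.pi fun _ : Fin n => gauss)) :=
        (integral_finset_sum _ fun y _ => F_integrable m n t y).symm
    _ = ∫ p : (Fin m → ℝ) × (Fin n → ℝ),
          (∏ i : Fin (min m n), w (d i) (t + p.1 (em m n i) + p.2 (en m n i)))
            ∂((Measure.pi fun _ : Fin m => gauss).prod (Measure.pi fun _ : Fin n => gauss)) := by
        apply integral_congr_ae
        apply Filter.Eventually.of_forall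
        intro p
        exact sum_diag_fiber (fun i j b => w b (t + p.1 i + p.2 j)) (fun i j => w_sum _) d
    _ = ∫ u : Fin m → ℝ, (∫ v : Fin n → ℝ,
          (∏ i : Fin (min m n), w (d i) (t + u (em m n i) + v (en m n i)))
            ∂(Measure.pi fun _ : Fin n => gauss)) ∂(Measure.pi fun _ : Fin m => gauss) :=
        int_prod_split _ hGint
    _ = ∫ u : Fin m → ℝ,
          (∏ i : Fin (min m n), gq (d i) (t + u (em m n i)))
            ∂(Measure.pi fun _ : Fin m => gauss) := by
        apply integral_congr_ae
        apply Filter.Eventually.of_forall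
        intro u
        calc ∫ v : Fin n → ℝ,
              (∏ i : Fin (min m n), w (d i) (t + u (em m n i) + v (en m n i)))
                ∂(Measure.pi fun _ : Fin n => gauss)
            = ∫ v : Fin n → ℝ, (∏ j : Fin n, fV t d u j (v j))
                ∂(Measure.pi fun _ : Fin n => gauss) := by
              apply integral_congr_ae
              apply Filter.Eventually.of_forall
              intro v
              calc ∏ i : Fin (min m n), w (d i) (t + u (em m n i) + v (en m n i))
                  = ∏ i : Fin (min m n), cV t d u v ↑i := by
                    apply Finset.prod_congr rfl; intro i _
                    rw [cV, dif_pos i.2]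
                _ = ∏ j : Fin n, (if (j : ℕ) < min m n then cV t d u v ↑j else 1) :=
                    (prod_fin_restrict (min_le_right m n) (cV t d u v)).symm
                _ = ∏ j : Fin n, fV t d u j (v j) := by
                    apply Finset.prod_congr rfl; intro j _
                    by_cases hj : (j : ℕ) < min m n
                    · rw [if_pos hj, cV, dif_pos hj, fV, dif_pos hj]
                      rfl
                    · rw [if_neg hj, fV, dif_neg hj]
            _ = ∏ j : Fin n, ∫ z, fV t d u j z ∂gauss := integral_pi_gauss (fV t d u)
            _ = ∏ j : Fin n, (if (j : ℕ) < min m n then cU t d u ↑j else 1) := by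
              apply Finset.prod_congr rfl; intro j _
              by_cases hj : (j : ℕ) < min m n
              · rw [if_pos hj, cU, dif_pos hj]
                simp only [fV, dif_pos hj]
                rfl
              · rw [if_neg hj]
                simp only [fV, dif_neg hj]
                simp
            _ = ∏ i : Fin (min m n), cU t d u ↑i :=
                prod_fin_restrict (min_le_right m n) (cU t d u)
            _ = ∏ i : Fin (min m n), gq (d i) (t + u (em m n i)) := by
              apply Finset.prod_congr rfl; intro i _
              rw [cU, dif_pos i.2]
    _ = ∫ u : Fin m → ℝ, (∏ i' : Fin m, fU t d i' (u i'))
          ∂(Measure.pi fun _ : Fin m => gauss) := by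
        apply integral_congr_ae
        apply Filter.Eventually.of_forall
        intro u
        calc ∏ i : Fin (min m n), gq (d i) (t + u (em m n i))
            = ∏ i : Fin (min m n), cU t d u ↑i := by
              apply Finset.prod_congr rfl; intro i _
              rw [cU, dif_pos i.2]
          _ = ∏ i' : Fin m, (if (i' : ℕ) < min m n then cU t d u ↑i' else 1) :=
              (prod_fin_restrict (min_le_left m n) (cU t d u)).symm
          _ = ∏ i' : Fin m, fU t d i' (u i') := by
              apply Finset.prod_congr rfl; intro i' _
              by_cases hi : (i' : ℕ) < min m n
              · rw [if_pos hi, cU, dif_pos hi, fU, dif_pos hi]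
                rfl
              · rw [if_neg hi, fU, dif_neg hi]
    _ = ∏ i' : Fin m, ∫ a, fU t d i' a ∂gauss := integral_pi_gauss (fU t d)
    _ = ∏ i' : Fin m, (if (i' : ℕ) < min m n then cQ t d ↑i' else 1) := by
        apply Finset.prod_congr rfl; intro i' _
        by_cases hi : (i' : ℕ) < min m n
        · rw [if_pos hi, cQ, dif_pos hi]
          simp only [fU, dif_pos hi]
          rfl
        · rw [if_neg hi]
          simp only [fU, dif_neg hi]
          simp
    _ = ∏ i : Fin (min m n), cQ t d ↑i :=
        prod_fin_restrict (min_le_left m n) (cQ t d)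
    _ = ∏ i : Fin (min m n), q t (d i) := by
        apply Finset.prod_congr rfl; intro i _
        rw [cQ, dif_pos i.2]

end Marg

section Hell

lemma sqrt_prod {ι : Type*} (s : Finset ι) (c : ι → ℝ) (hc : ∀ i ∈ s, 0 ≤ c i) :
    Real.sqrt (∏ i ∈ s, c i) = ∏ i ∈ s, Real.sqrt (c i) := by
  classical
  induction s using Finset.cons_induction with
  | empty => simp
  | cons a s ha ih =>
      rw [Finset.prod_cons, Finset.prod_cons,
        Real.sqrt_mul (hc a (Finset.mem_cons_self a s)),
        ih (fun i hi => hc i (Finset.mem_cons_of_mem hi))]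

lemma sum_sqrt_mul_le {ι : Type*} (s : Finset ι) (f g : ι → ℝ)
    (hf : ∀ a ∈ s, 0 ≤ f a) (hg : ∀ a ∈ s, 0 ≤ g a) :
    ∑ a ∈ s, Real.sqrt (f a * g a) ≤ Real.sqrt ((∑ a ∈ s, f a) * (∑ a ∈ s, g a)) := by
  have h1 : ∑ a ∈ s, Real.sqrt (f a * g a)
      = ∑ a ∈ s, Real.sqrt (f a) * Real.sqrt (g a) :=
    Finset.sum_congr rfl fun a ha => Real.sqrt_mul (hf a ha) _
  rw [h1, Real.le_sqrt
    (Finset.sum_nonneg fun a _ => mul_nonneg (Real.sqrt_nonneg _) (Real.sqrt_nonneg _))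
    (mul_nonneg (Finset.sum_nonneg hf) (Finset.sum_nonneg hg))]
  calc (∑ a ∈ s, Real.sqrt (f a) * Real.sqrt (g a)) ^ 2
      ≤ (∑ a ∈ s, Real.sqrt (f a) ^ 2) * ∑ a ∈ s, Real.sqrt (g a) ^ 2 :=
        Finset.sum_mul_sq_le_sq_mul_sq s _ _
    _ = (∑ a ∈ s, f a) * (∑ a ∈ s, g a) := by
        rw [Finset.sum_congr rfl fun a ha => Real.sq_sqrt (hf a ha),
          Finset.sum_congr rfl fun a ha => Real.sq_sqrt (hg a ha)]

lemma hell (m n : ℕ) (t μ : ℝ) :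
    ∑ y : Fin m → Fin n → Bool,
      Real.sqrt (mixedLogisticLik m n t y * mixedLogisticLik m n μ y)
      ≤ (Real.sqrt (p0 t * p0 μ) + Real.sqrt ((1 - p0 t) * (1 - p0 μ))) ^ (min m n) := by
  classical
  calc ∑ y : Fin m → Fin n → Bool,
        Real.sqrt (mixedLogisticLik m n t y * mixedLogisticLik m n μ y)
      = ∑ d : Fin (min m n) → Bool,
          ∑ y ∈ Finset.univ.filter (fun y : Fin m → Fin n → Bool => dg m n y = d),
            Real.sqrt (mixedLogisticLik m n t y * mixedLogisticLik m n μ y) :=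
        (Finset.sum_fiberwise_of_maps_to (fun y _ => Finset.mem_univ (dg m n y)) _).symm
    _ ≤ ∑ d : Fin (min m n) → Bool,
          Real.sqrt
            ((∑ y ∈ Finset.univ.filter (fun y : Fin m → Fin n → Bool => dg m n y = d),
                mixedLogisticLik m n t y)
              * (∑ y ∈ Finset.univ.filter (fun y : Fin m → Fin n → Bool => dg m n y = d),
                mixedLogisticLik m n μ y)) :=
        Finset.sum_le_sum fun d _ => sum_sqrt_mul_le _ _ _
          (fun y _ => (lik_pos m n t y).le) (fun y _ => (lik_pos m n μ y).le)
    _ = ∑ d : Fin (min m n) → Bool,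
          Real.sqrt ((∏ i, q t (d i)) * (∏ i, q μ (d i))) := by
        apply Finset.sum_congr rfl
        intro d _
        rw [marg m n t d, marg m n μ d]
    _ = ∑ d : Fin (min m n) → Bool, ∏ i, Real.sqrt (q t (d i) * q μ (d i)) := by
        apply Finset.sum_congr rfl
        intro d _
        rw [← Finset.prod_mul_distrib,
          sqrt_prod _ _ (fun i _ => mul_nonneg (q_pos t (d i)).le (q_pos μ (d i)).le)]
    _ = ∏ _i : Fin (min m n), ∑ b : Bool, Real.sqrt (q t b * q μ b) :=
        sum_pi_prod (fun _i (b : Bool) => Real.sqrt (q t b * q μ b))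
    _ = (∑ b : Bool, Real.sqrt (q t b * q μ b)) ^ (min m n) := by
        rw [Finset.prod_const, Finset.card_univ, Fintype.card_fin]
    _ = (Real.sqrt (p0 t * p0 μ) + Real.sqrt ((1 - p0 t) * (1 - p0 μ))) ^ (min m n) := by
        rw [Fintype.sum_bool]
        rw [q_false, q_false]
        rfl

lemma rho_lt_one {a b : ℝ} (ha : 0 < a) (ha1 : a < 1) (hb : 0 < b) (hb1 : b < 1)
    (hab : a ≠ b) :
    Real.sqrt (a * b) + Real.sqrt ((1 - a) * (1 - b)) < 1 := by
  set s1 := Real.sqrt (a * b) with hs1def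
  set s2 := Real.sqrt ((1 - a) * (1 - b)) with hs2def
  set x := Real.sqrt (a * (1 - b)) with hxdef
  set y := Real.sqrt (b * (1 - a)) with hydef
  have hs1 : s1 ^ 2 = a * b := Real.sq_sqrt (by nlinarith)
  have hs2 : s2 ^ 2 = (1 - a) * (1 - b) := Real.sq_sqrt (by nlinarith)
  have hx2 : x ^ 2 = a * (1 - b) := Real.sq_sqrt (by nlinarith)
  have hy2 : y ^ 2 = b * (1 - a) := Real.sq_sqrt (by nlinarith)
  have hs1n : 0 ≤ s1 := Real.sqrt_nonneg _
  have hs2n : 0 ≤ s2 := Real.sqrt_nonneg _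
  have hxn : 0 ≤ x := Real.sqrt_nonneg _
  have hyn : 0 ≤ y := Real.sqrt_nonneg _
  have hxy : s1 * s2 = x * y := by
    rw [hs1def, hs2def, hxdef, hydef, ← Real.sqrt_mul (by nlinarith),
      ← Real.sqrt_mul (by nlinarith)]
    congr 1
    ring
  have hxny : x ≠ y := by
    intro h
    apply hab
    have h2 : x ^ 2 = y ^ 2 := by rw [h]
    rw [hx2, hy2] at h2
    nlinarith
  have hd : 0 < (x - y) ^ 2 :=
    lt_of_le_of_ne (sq_nonneg _) (Ne.symm (pow_ne_zero 2 (sub_ne_zero.2 hxny)))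
  nlinarith [sq_nonneg (s1 + s2)]

end Hell

section Assemble

lemma bad_sum_le (m n : ℕ) (t μ : ℝ) (h : p0 t ≠ p0 μ) :
    ∑ y ∈ Finset.univ.filter (fun y : Fin m → Fin n → Bool =>
        mixedLogisticLik m n μ y ≤ mixedLogisticLik m n t y),
      mixedLogisticLik m n μ y
      ≤ (Real.sqrt (p0 t * p0 μ) + Real.sqrt ((1 - p0 t) * (1 - p0 μ))) ^ (min m n) := by
  classical
  calc ∑ y ∈ Finset.univ.filter (fun y : Fin m → Fin n → Bool =>
          mixedLogisticLik m n μ y ≤ mixedLogisticLik m n t y),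
        mixedLogisticLik m n μ y
      ≤ ∑ y ∈ Finset.univ.filter (fun y : Fin m → Fin n → Bool =>
          mixedLogisticLik m n μ y ≤ mixedLogisticLik m n t y),
          Real.sqrt (mixedLogisticLik m n t y * mixedLogisticLik m n μ y) := by
        apply Finset.sum_le_sum
        intro y hy
        have hy' := (Finset.mem_filter.1 hy).2
        calc mixedLogisticLik m n μ y
            = Real.sqrt (mixedLogisticLik m n μ y * mixedLogisticLik m n μ y) :=
              (Real.sqrt_mul_self (lik_pos m n μ y).le).symm
          _ ≤ Real.sqrt (mixedLogisticLik m n t y * mixedLogisticLik m n μ y) :=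
              Real.sqrt_le_sqrt (mul_le_mul_of_nonneg_right hy' (lik_pos m n μ y).le)
    _ ≤ ∑ y : Fin m → Fin n → Bool,
          Real.sqrt (mixedLogisticLik m n t y * mixedLogisticLik m n μ y) :=
        Finset.sum_le_sum_of_subset_of_nonneg (Finset.subset_univ _)
          (fun y _ _ => Real.sqrt_nonneg _)
    _ ≤ _ := hell m n t μ

lemma preimage_finset_prob {Ω : Type*} [MeasurableSpace Ω] (P : Measure Ω)
    [IsProbabilityMeasure P] (μ : ℝ) {m n : ℕ} (Y : Ω → (Fin m → Fin n → Bool))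
    (hmeas : Measurable Y)
    (hdist : ∀ yv : Fin m → Fin n → Bool,
      P {ω | Y ω = yv} = ENNReal.ofReal (mixedLogisticLik m n μ yv))
    (B : Finset (Fin m → Fin n → Bool)) :
    P (Y ⁻¹' ↑B) = ENNReal.ofReal (∑ y ∈ B, mixedLogisticLik m n μ y) := by
  classical
  have hun : Y ⁻¹' ↑B = ⋃ y ∈ B, {ω | Y ω = y} := by
    ext ω
    simp [Set.mem_preimage]
  rw [hun, measure_biUnion_finset]
  · rw [ENNReal.ofReal_sum_of_nonneg (fun y _ => (lik_pos m n μ y).le)]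
    exact Finset.sum_congr rfl fun y _ => hdist y
  · intro y _ y' _ hyy
    apply Set.disjoint_left.2
    intro ω h1 h2
    exact hyy (h1.symm.trans h2)
  · intro y _
    exact hmeas (Set.to_countable {y}).measurableSet

end Assemble

end CramerAux
end CramerAux

open CramerAux

/-- Cramér consistency in the open problem (Theorem 1): if the data `Y^{(m,n)}`
are distributed according to the mixed logistic model with crossed standard
normal random effects and true parameter `μ`, then, with probability tending to
one as `m, n → ∞`, the likelihood equation has a root within any prescribed
distance of `μ`. -/
theorem cramer_consistency_open_problem
    {Ω : Type*} [MeasurableSpace Ω] (P : Measure Ω) [IsProbabilityMeasure P]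
    (μ : ℝ) (Y : (m n : ℕ) → Ω → (Fin m → Fin n → Bool))
    (hmeas : ∀ m n, Measurable (Y m n))
    (hdist : ∀ m n (yv : Fin m → Fin n → Bool),
      P {ω | Y m n ω = yv} = ENNReal.ofReal (mixedLogisticLik m n μ yv)) :
    ∀ ε > (0:ℝ), ∀ δ > (0:ℝ), ∃ N : ℕ, ∀ m ≥ N, ∀ n ≥ N,
      P {ω | ∃ r : ℝ, |r - μ| < ε ∧
          deriv (fun t => Real.log (mixedLogisticLik m n t (Y m n ω))) r = 0}
        ≥ ENNReal.ofReal (1 - δ) := by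
  classical
  intro ε hε δ hδ
  set t1 : ℝ := μ - ε/2 with ht1
  set t2 : ℝ := μ + ε/2 with ht2
  set ρ1 : ℝ := Real.sqrt (p0 t1 * p0 μ) + Real.sqrt ((1 - p0 t1) * (1 - p0 μ)) with hρ1
  set ρ2 : ℝ := Real.sqrt (p0 t2 * p0 μ) + Real.sqrt ((1 - p0 t2) * (1 - p0 μ)) with hρ2
  have hρ1lt : ρ1 < 1 :=
    rho_lt_one (p0_pos t1) (p0_lt_one t1) (p0_pos μ) (p0_lt_one μ)
      (ne_of_lt (p0_mono (by rw [ht1]; linarith)))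
  have hρ2lt : ρ2 < 1 :=
    rho_lt_one (p0_pos t2) (p0_lt_one t2) (p0_pos μ) (p0_lt_one μ)
      (ne_of_gt (p0_mono (by rw [ht2]; linarith)))
  have hρ1n : 0 ≤ ρ1 := by positivity
  have hρ2n : 0 ≤ ρ2 := by positivity
  set ρ : ℝ := max ρ1 ρ2 with hρ
  have hρn : 0 ≤ ρ1 ⊔ ρ2 := le_trans hρ1n (le_max_left _ _)
  have hρlt : ρ1 ⊔ ρ2 < 1 := max_lt hρ1lt hρ2lt
  have htend : Filter.Tendsto (fun j : ℕ => ρ ^ j) Filter.atTop (nhds 0) :=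
    tendsto_pow_atTop_nhds_zero_of_lt_one hρn hρlt
  obtain ⟨N, hN⟩ := Filter.eventually_atTop.1 (htend.eventually_lt_const (by linarith : (0:ℝ) < δ/2))
  refine ⟨N, fun m hm n hn => ?_⟩
  have hk : N ≤ min m n := le_min hm hn
  have hρk : ρ ^ (min m n) < δ/2 := hN _ hk
  set Bad1 : Finset (Fin m → Fin n → Bool) := Finset.univ.filter (fun y =>
    mixedLogisticLik m n μ y ≤ mixedLogisticLik m n t1 y) with hBad1
  set Bad2 : Finset (Fin m → Fin n → Bool) := Finset.univ.filter (fun y =>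
    mixedLogisticLik m n μ y ≤ mixedLogisticLik m n t2 y) with hBad2
  have hbs1 : ∑ y ∈ Bad1, mixedLogisticLik m n μ y ≤ δ/2 := by
    calc ∑ y ∈ Bad1, mixedLogisticLik m n μ y ≤ ρ1 ^ (min m n) :=
          bad_sum_le m n t1 μ (ne_of_lt (p0_mono (by rw [ht1]; linarith)))
      _ ≤ ρ ^ (min m n) := pow_le_pow_left₀ hρ1n (le_max_left _ _) _
      _ ≤ δ/2 := hρk.le
  have hbs2 : ∑ y ∈ Bad2, mixedLogisticLik m n μ y ≤ δ/2 := by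
    calc ∑ y ∈ Bad2, mixedLogisticLik m n μ y ≤ ρ2 ^ (min m n) :=
          bad_sum_le m n t2 μ (ne_of_gt (p0_mono (by rw [ht2]; linarith)))
      _ ≤ ρ ^ (min m n) := pow_le_pow_left₀ hρ2n (le_max_right _ _) _
      _ ≤ δ/2 := hρk.le
  have hP1 : P (Y m n ⁻¹' ↑Bad1) ≤ ENNReal.ofReal (δ/2) := by
    rw [preimage_finset_prob P μ (Y m n) (hmeas m n) (hdist m n) Bad1]
    exact ENNReal.ofReal_le_ofReal hbs1
  have hP2 : P (Y m n ⁻¹' ↑Bad2) ≤ ENNReal.ofReal (δ/2) := by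
    rw [preimage_finset_prob P μ (Y m n) (hmeas m n) (hdist m n) Bad2]
    exact ENNReal.ofReal_le_ofReal hbs2
  have hPbad : P (Y m n ⁻¹' ↑(Bad1 ∪ Bad2)) ≤ ENNReal.ofReal δ := by
    calc P (Y m n ⁻¹' ↑(Bad1 ∪ Bad2))
        ≤ P (Y m n ⁻¹' ↑Bad1) + P (Y m n ⁻¹' ↑Bad2) := by
          rw [Finset.coe_union, Set.preimage_union]
          exact measure_union_le _ _
      _ ≤ ENNReal.ofReal (δ/2) + ENNReal.ofReal (δ/2) := add_le_add hP1 hP2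
      _ = ENNReal.ofReal δ := by
          rw [← ENNReal.ofReal_add (by linarith) (by linarith)]
          norm_num
  have hsub : (Y m n ⁻¹' ↑(Bad1 ∪ Bad2))ᶜ ⊆
      {ω | ∃ r : ℝ, |r - μ| < ε ∧
        deriv (fun t => Real.log (mixedLogisticLik m n t (Y m n ω))) r = 0} := by
    intro ω hω
    simp only [Set.mem_compl_iff, Set.mem_preimage, Finset.coe_union, Set.mem_union,
      Finset.mem_coe, hBad1, hBad2, Finset.mem_filter, Finset.mem_univ, true_and,
      not_or, not_le] at hω
    exact exists_root m n (Y m n ω) μ ε hε hω.1 hω.2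
  have hmeasbad : MeasurableSet (Y m n ⁻¹' ↑(Bad1 ∪ Bad2)) :=
    hmeas m n (Set.to_countable _).measurableSet
  calc ENNReal.ofReal (1 - δ)
      = ENNReal.ofReal 1 - ENNReal.ofReal δ := ENNReal.ofReal_sub 1 hδ.le
    _ = 1 - ENNReal.ofReal δ := by rw [ENNReal.ofReal_one]
    _ ≤ 1 - P (Y m n ⁻¹' ↑(Bad1 ∪ Bad2)) := tsub_le_tsub_left hPbad 1
    _ = P ((Y m n ⁻¹' ↑(Bad1 ∪ Bad2))ᶜ) := (prob_compl_eq_one_sub hmeasbad).symm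
    _ ≤ P {ω | ∃ r : ℝ, |r - μ| < ε ∧
          deriv (fun t => Real.log (mixedLogisticLik m n t (Y m n ω))) r = 0} :=
        measure_mono hsub
end
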